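/- arXiv:1902.00197 — 6 statements merged into one kernel-verified Lean document; each statement's English description precedes it below -/
import Mathlib

section
/- Let X₁, …, Xₙ be sampled uniformly without replacement from a finite population {x₁, …, x_N} ⊆ {0,1} with n ≤ N, let μ = (1/N)·∑ᵢ xᵢ, and let S_k = ∑_{i=1}^k X_i. Then for any θ > 0, the probability that max_{1 ≤ k ≤ n} |S_k − μ·k| ≥ sqrt(n·θ) is at most 1/θ. -/
open MeasureTheory Finset
open scoped Classical ENNReal

namespace Stmt3

variable {N : ℕ} (x : Fin N → ℝ)

noncomputable def mu : ℝ := (∑ i, x i) / N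

noncomputable def SS (k : ℕ) (σ : Equiv.Perm (Fin N)) : ℝ :=
  ∑ i : Fin N, if (i : ℕ) < k then x (σ i) else 0

noncomputable def DD (k : ℕ) (σ : Equiv.Perm (Fin N)) : ℝ := SS x k σ - mu x * k

def F (N k : ℕ) : Finset (Fin N) := univ.filter fun i => (i : ℕ) < k

lemma SS_eq (k : ℕ) (σ : Equiv.Perm (Fin N)) : SS x k σ = ∑ i ∈ F N k, x (σ i) := by
  rw [F, sum_filter, SS]

lemma card_F (k : ℕ) (hk : k ≤ N) : (F N k).card = k := by
  classical
  have h2 : ∀ m ∈ Finset.range k, m < N := fun m hm => lt_of_lt_of_le (Finset.mem_range.mp hm) hk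
  rw [F, show Finset.filter (fun i : Fin N => (i:ℕ) < k) univ = (Finset.range k).attachFin h2 from by
    ext a; simp [Finset.mem_attachFin], Finset.card_attachFin, Finset.card_range]

lemma sum_perm_comp (π : Equiv.Perm (Fin N)) (f : Equiv.Perm (Fin N) → ℝ) :
    ∑ σ : Equiv.Perm (Fin N), f (σ * π) = ∑ σ : Equiv.Perm (Fin N), f σ :=
  Equiv.sum_comp (Equiv.mulRight π) f


lemma posSym (k : ℕ) {i j : Fin N} (hi : (i : ℕ) < k) (hj : (j : ℕ) < k)
    (g : Equiv.Perm (Fin N) → ℝ)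
    (Hg : ∀ σ τ : Equiv.Perm (Fin N), (∀ m : Fin N, k ≤ (m : ℕ) → σ m = τ m) → g σ = g τ) :
    ∑ σ : Equiv.Perm (Fin N), x (σ i) * g σ = ∑ σ : Equiv.Perm (Fin N), x (σ j) * g σ := by
  classical
  rw [← sum_perm_comp (Equiv.swap i j) (fun σ => x (σ j) * g σ)]
  apply Finset.sum_congr rfl
  intro σ _
  have h1 : (σ * Equiv.swap i j) j = σ i := by simp
  have h2 : g (σ * Equiv.swap i j) = g σ := by
    apply Hg
    intro m hm
    have hmi : m ≠ i := Fin.ne_of_val_ne (by omega)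
    have hmj : m ≠ j := Fin.ne_of_val_ne (by omega)
    show σ (Equiv.swap i j m) = σ m
    rw [Equiv.swap_apply_of_ne_of_ne hmi hmj]
  rw [h1, h2]


lemma sum_SS_mul (hN0 : 0 < N) (k' k : ℕ) (h1 : 1 ≤ k') (h2 : k' ≤ k) (hk : k ≤ N)
    (g : Equiv.Perm (Fin N) → ℝ)
    (Hg : ∀ σ τ : Equiv.Perm (Fin N), (∀ m : Fin N, k ≤ (m : ℕ) → σ m = τ m) → g σ = g τ) :
    (k : ℝ) * ∑ σ : Equiv.Perm (Fin N), SS x k' σ * g σ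
      = (k' : ℝ) * ∑ σ : Equiv.Perm (Fin N), SS x k σ * g σ := by
  classical
  set i0 : Fin N := ⟨0, hN0⟩ with hi0
  set c : ℝ := ∑ σ : Equiv.Perm (Fin N), x (σ i0) * g σ with hc
  have key : ∀ m : ℕ, 1 ≤ m → m ≤ k → (∑ σ : Equiv.Perm (Fin N), SS x m σ * g σ) = m * c := by
    intro m hm1 hm2
    have : ∀ σ : Equiv.Perm (Fin N), SS x m σ * g σ = ∑ i ∈ F N m, x (σ i) * g σ := by
      intro σ; rw [SS_eq, Finset.sum_mul]
    simp_rw [this]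
    rw [Finset.sum_comm]
    have : ∀ i ∈ F N m, (∑ σ : Equiv.Perm (Fin N), x (σ i) * g σ) = c := by
      intro i hi
      have hilt : (i : ℕ) < k := lt_of_lt_of_le (by simpa [F] using hi) hm2
      exact posSym x k hilt (lt_of_lt_of_le hm1 hm2 : (i0 : ℕ) < k) g Hg
    rw [Finset.sum_congr rfl this, Finset.sum_const, card_F m (le_trans hm2 hk), nsmul_eq_mul]
  rw [key k' h1 h2, key k (le_trans h1 h2) le_rfl]
  ring


lemma crossZero (hN0 : 0 < N) (k' k : ℕ) (h1 : 1 ≤ k') (h2 : k' ≤ k) (hk : k ≤ N)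
    (g : Equiv.Perm (Fin N) → ℝ)
    (Hg : ∀ σ τ : Equiv.Perm (Fin N), (∀ m : Fin N, k ≤ (m : ℕ) → σ m = τ m) → g σ = g τ) :
    ∑ σ : Equiv.Perm (Fin N), (DD x k' σ / k' - DD x k σ / k) * g σ = 0 := by
  classical
  have hk'0 : (k' : ℝ) ≠ 0 := Nat.cast_ne_zero.mpr (by omega)
  have hk0 : (k : ℝ) ≠ 0 := Nat.cast_ne_zero.mpr (by omega)
  have main := sum_SS_mul x hN0 k' k h1 h2 hk g Hg
  have step : ∀ σ : Equiv.Perm (Fin N),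
      (DD x k' σ / k' - DD x k σ / k) * g σ
        = (SS x k' σ * g σ) / k' - (SS x k σ * g σ) / k := by
    intro σ
    rw [DD, DD]
    field_simp
    ring
  rw [Finset.sum_congr rfl (fun σ _ => step σ), Finset.sum_sub_distrib,
    ← Finset.sum_div, ← Finset.sum_div]
  field_simp
  linarith [main]


lemma Dsq (hN0 : 0 < N) (hx : ∀ i, x i = 0 ∨ x i = 1) (k : ℕ) (hkN : k ≤ N) :
    ∑ σ : Equiv.Perm (Fin N), (DD x k σ)^2 ≤ (Nat.factorial N : ℝ) * (k / 4) := by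
  classical
  set y : Fin N → ℝ := fun a => x a - mu x with hy
  have hNne : (N : ℝ) ≠ 0 := Nat.cast_ne_zero.mpr (by omega)
  have hsum_y : ∑ a, y a = 0 := by
    simp only [hy, Finset.sum_sub_distrib, Finset.sum_const, Finset.card_univ,
      Fintype.card_fin, nsmul_eq_mul, mu]
    field_simp
    ring
  set V : ℝ := ∑ a, (y a)^2 with hV
  have hVle : V ≤ N / 4 := by
    have hxx : ∀ a, (x a)^2 = x a := by
      intro a; rcases hx a with h | h <;> rw [h] <;> ring
    have hmu' : ∑ a, x a = N * mu x := by rw [mu]; field_simp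
    have h1 : ∀ a : Fin N, (y a)^2 = x a - 2 * mu x * x a + (mu x)^2 := by
      intro a
      simp only [hy]
      linear_combination hxx a
    have hVeq : V = N * mu x - N * (mu x)^2 := by
      rw [hV, Finset.sum_congr rfl (fun a _ => h1 a), Finset.sum_add_distrib,
        Finset.sum_sub_distrib, ← Finset.mul_sum, hmu', Finset.sum_const, Finset.card_univ,
        Fintype.card_fin, nsmul_eq_mul]
      ring
    nlinarith [sq_nonneg (2 * mu x - 1), Nat.cast_nonneg (α := ℝ) N]
  set T : Fin N → Fin N → ℝ := fun i j => ∑ σ : Equiv.Perm (Fin N), y (σ i) * y (σ j) with hT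
  have Ttrans : ∀ (i j i' j' : Fin N) (π : Equiv.Perm (Fin N)), π i' = i → π j' = j →
      T i j = T i' j' := by
    intro i j i' j' π hπi hπj
    have h := sum_perm_comp π (fun σ => y (σ i') * y (σ j'))
    simp only [hT]
    rw [← h]
    apply Finset.sum_congr rfl
    intro σ _
    simp only [Equiv.Perm.mul_apply, hπi, hπj]
  have Tnonneg : ∀ i, 0 ≤ T i i := by
    intro i
    apply Finset.sum_nonneg
    intro σ _
    exact mul_self_nonneg _
  have sum_diag : ∑ i, T i i = (Nat.factorial N : ℝ) * V := by
    rw [hT, Finset.sum_comm]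
    have : ∀ σ : Equiv.Perm (Fin N), (∑ i, y (σ i) * y (σ i)) = V := by
      intro σ
      rw [hV]
      rw [← Equiv.sum_comp σ (fun a => (y a)^2)]
      apply Finset.sum_congr rfl
      intro i _
      ring
    rw [Finset.sum_congr rfl (fun σ _ => this σ), Finset.sum_const, Finset.card_univ,
      Fintype.card_perm, Fintype.card_fin, nsmul_eq_mul]
  have Tdiag_val : ∀ i, (N : ℝ) * T i i = (Nat.factorial N : ℝ) * V := by
    intro i
    have h9 : ∑ i', T i' i' = (N : ℝ) * T i i := by
      rw [Finset.sum_congr rfl (fun i' (_ : i' ∈ univ) => Ttrans i' i' i i (Equiv.swap i' i)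
        (Equiv.swap_apply_right i' i) (Equiv.swap_apply_right i' i)), Finset.sum_const,
        Finset.card_univ, Fintype.card_fin, nsmul_eq_mul]
    rw [← h9, sum_diag]
  have Toff : ∀ i j, i ≠ j → T i j ≤ 0 := by
    intro i j hij
    have hN2 : 1 < N := by
      have hnt : Nontrivial (Fin N) := ⟨⟨i, j, hij⟩⟩
      have h10 := Fintype.one_lt_card (α := Fin N)
      rwa [Fintype.card_fin] at h10
    have hrow : ∑ j' ∈ Finset.univ.erase i, T i j' = - T i i := by
      rw [hT]
      rw [Finset.sum_comm]
      have : ∀ σ : Equiv.Perm (Fin N), (∑ j' ∈ Finset.univ.erase i, y (σ i) * y (σ j'))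
          = - (y (σ i) * y (σ i)) := by
        intro σ
        rw [← Finset.mul_sum]
        have h0 : ∑ j' : Fin N, y (σ j') = 0 := by
          rw [← hsum_y]
          exact Equiv.sum_comp σ y
        have : ∑ j' ∈ Finset.univ.erase i, y (σ j') = - y (σ i) := by
          have := Finset.add_sum_erase Finset.univ (fun j' => y (σ j')) (Finset.mem_univ i)
          rw [h0] at this
          linarith
        rw [this]; ring
      rw [Finset.sum_congr rfl (fun σ _ => this σ), Finset.sum_neg_distrib]
    have hconst : ∀ j' ∈ Finset.univ.erase i, T i j' = T i j := by
      intro j' hj'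
      have hj'i : j' ≠ i := (Finset.mem_erase.mp hj').1
      by_cases hjj : j = j'
      · rw [hjj]
      · exact Ttrans i j' i j (Equiv.swap j j')
          (Equiv.swap_apply_of_ne_of_ne hij (Ne.symm hj'i))
          (Equiv.swap_apply_left j j')
    have hcard : (Finset.univ.erase i).card = N - 1 := by
      rw [Finset.card_erase_of_mem (Finset.mem_univ i), Finset.card_univ, Fintype.card_fin]
    have : ((N : ℝ) - 1) * T i j = - T i i := by
      rw [← hrow, Finset.sum_congr rfl hconst, Finset.sum_const, hcard, nsmul_eq_mul]
      have : ((N - 1 : ℕ) : ℝ) = (N : ℝ) - 1 := by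
        rw [Nat.cast_sub (by omega)]; norm_num
      rw [this]
    nlinarith [Tnonneg i, (by exact_mod_cast hN2 : (1:ℝ) < (N:ℝ))]
  have DD_eq : ∀ σ, DD x k σ = ∑ i ∈ F N k, y (σ i) := by
    intro σ
    rw [DD, SS_eq]
    simp only [hy, Finset.sum_sub_distrib, Finset.sum_const, card_F k hkN, nsmul_eq_mul]
    ring
  have expand : ∑ σ : Equiv.Perm (Fin N), (DD x k σ)^2
      = ∑ i ∈ F N k, ∑ j ∈ F N k, T i j := by
    have : ∀ σ, (DD x k σ)^2 = ∑ i ∈ F N k, ∑ j ∈ F N k, y (σ i) * y (σ j) := by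
      intro σ
      rw [DD_eq σ, sq, Finset.sum_mul_sum]
    rw [Finset.sum_congr rfl (fun σ _ => this σ)]
    rw [Finset.sum_comm]
    apply Finset.sum_congr rfl
    intro i _
    rw [Finset.sum_comm]
  rw [expand]
  have hsplit : ∀ i ∈ F N k, ∑ j ∈ F N k, T i j ≤ (Nat.factorial N : ℝ) * V / N := by
    intro i hi
    have h1 : ∑ j ∈ (F N k).erase i, T i j ≤ 0 := by
      apply Finset.sum_nonpos
      intro j hj
      exact Toff i j (Ne.symm (Finset.mem_erase.mp hj).1)
    have h2 : T i i + ∑ j ∈ (F N k).erase i, T i j = ∑ j ∈ F N k, T i j :=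
      Finset.add_sum_erase (F N k) (T i) hi
    have h3 : T i i = (Nat.factorial N : ℝ) * V / N := by
      have := Tdiag_val i
      field_simp
      linarith
    linarith
  calc ∑ i ∈ F N k, ∑ j ∈ F N k, T i j ≤ ∑ _i ∈ F N k, (Nat.factorial N : ℝ) * V / N :=
        Finset.sum_le_sum hsplit
    _ = k * ((Nat.factorial N : ℝ) * V / N) := by
        rw [Finset.sum_const, card_F k hkN, nsmul_eq_mul]
    _ ≤ (Nat.factorial N : ℝ) * (k / 4) := by
        have hNpos : (0:ℝ) < N := by exact_mod_cast hN0
        have hfac : (0:ℝ) ≤ (Nat.factorial N : ℝ) := Nat.cast_nonneg _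
        have hkpos : (0:ℝ) ≤ (k:ℝ) := Nat.cast_nonneg _
        have heq : (k:ℝ) * ((Nat.factorial N : ℝ) * V / N)
            = (k * ((Nat.factorial N : ℝ) * V)) / N := by ring
        rw [heq, div_le_iff₀ hNpos]
        nlinarith [mul_le_mul_of_nonneg_left hVle
          (mul_nonneg hkpos hfac : (0:ℝ) ≤ (k:ℝ) * (Nat.factorial N : ℝ))]

lemma SS_high (k j : ℕ) (hkj : k ≤ j) (σ τ : Equiv.Perm (Fin N))
    (h : ∀ m : Fin N, k ≤ (m : ℕ) → σ m = τ m) : SS x j σ = SS x j τ := by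
  classical
  have key : ∀ ρ : Equiv.Perm (Fin N), SS x j ρ
      = (∑ a, x a) - ∑ i ∈ univ.filter (fun i : Fin N => ¬ (i : ℕ) < j), x (ρ i) := by
    intro ρ
    have h1 := Finset.sum_filter_add_sum_filter_not univ (fun i : Fin N => (i : ℕ) < j)
      (fun i => x (ρ i))
    have h2 : ∑ i, x (ρ i) = ∑ a, x a := Equiv.sum_comp ρ x
    have h3 : SS x j ρ = ∑ i ∈ univ.filter (fun i : Fin N => (i : ℕ) < j), x (ρ i) := by
      rw [SS, Finset.sum_filter]
    rw [h3]
    linarith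
  rw [key σ, key τ]
  congr 1
  apply Finset.sum_congr rfl
  intro i hi
  have : ¬ (i : ℕ) < j := (Finset.mem_filter.mp hi).2
  rw [h i (by omega)]

lemma DD_high (k j : ℕ) (hkj : k ≤ j) (σ τ : Equiv.Perm (Fin N))
    (h : ∀ m : Fin N, k ≤ (m : ℕ) → σ m = τ m) : DD x j σ = DD x j τ := by
  rw [DD, DD, SS_high x k j hkj σ τ h]

lemma sq_sum_odd : ∀ k : ℕ, ((k : ℝ))^2 = ∑ k' ∈ Finset.Icc 1 k, (2 * (k' : ℝ) - 1) := by
  intro k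
  induction k with
  | zero => simp
  | succ m ih =>
    rw [Finset.sum_Icc_succ_top (by omega : 1 ≤ m + 1), ← ih]
    push_cast
    ring

lemma main_bound (hN0 : 0 < N) (hx : ∀ i, x i = 0 ∨ x i = 1) (n : ℕ) (hn : 1 ≤ n)
    (hN : n ≤ N) (t : ℝ) (ht : 0 ≤ t) :
    ((univ.filter (fun σ : Equiv.Perm (Fin N) =>
        ∃ k, 1 ≤ k ∧ k ≤ n ∧ t ≤ |DD x k σ|)).card : ℝ) * t^2
      ≤ (Nat.factorial N : ℝ) * (n / 2) := by
  classical
  set E := univ.filter (fun σ : Equiv.Perm (Fin N) =>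
    ∃ k, 1 ≤ k ∧ k ≤ n ∧ t ≤ |DD x k σ|) with hE
  set Ak : ℕ → Finset (Equiv.Perm (Fin N)) := fun k => univ.filter
    (fun σ => t ≤ |DD x k σ| ∧ ∀ j, k < j → j ≤ n → |DD x j σ| < t) with hAk
  -- covering
  have cover : E ⊆ (Finset.Icc 1 n).biUnion Ak := by
    intro σ hσ
    obtain ⟨k, hk1, hk2, hk3⟩ := (Finset.mem_filter.mp hσ).2
    set K := (Finset.Icc 1 n).filter (fun k => t ≤ |DD x k σ|) with hK
    have hKne : K.Nonempty := ⟨k, by simp [hK, Finset.mem_Icc, hk1, hk2, hk3]⟩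
    set k0 := K.max' hKne with hk0
    have hk0K : k0 ∈ K := K.max'_mem hKne
    have hk0I : k0 ∈ Finset.Icc 1 n := (Finset.mem_filter.mp hk0K).1
    apply Finset.mem_biUnion.mpr
    refine ⟨k0, hk0I, ?_⟩
    apply Finset.mem_filter.mpr
    refine ⟨Finset.mem_univ _, (Finset.mem_filter.mp hk0K).2, ?_⟩
    intro j hj1 hj2
    by_contra hcon
    push_neg at hcon
    have hjK : j ∈ K := by
      apply Finset.mem_filter.mpr
      exact ⟨Finset.mem_Icc.mpr ⟨by omega, hj2⟩, hcon⟩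
    have := K.le_max' j hjK
    omega
  -- disjointness
  have disj : ∀ a ∈ (Finset.Icc 1 n : Finset ℕ), ∀ b ∈ (Finset.Icc 1 n : Finset ℕ),
      a ≠ b → Disjoint (Ak a) (Ak b) := by
    have key : ∀ a b : ℕ, a < b → b ≤ n → Disjoint (Ak a) (Ak b) := by
      intro a b hab hbn
      rw [Finset.disjoint_left]
      intro σ hsa hsb
      have h1 := (Finset.mem_filter.mp hsa).2.2 b hab hbn
      have h2 := (Finset.mem_filter.mp hsb).2.1
      linarith
    intro a ha b hb hab
    rcases lt_or_gt_of_ne hab with h | h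
    · exact key a b h (Finset.mem_Icc.mp hb).2
    · exact (key b a h (Finset.mem_Icc.mp ha).2).symm
  -- step 2 : card bound on each Ak
  have step2 : ∀ k ∈ Finset.Icc 1 n, ((Ak k).card : ℝ) * t^2 ≤ ∑ σ ∈ Ak k, (DD x k σ)^2 := by
    intro k _
    have : ∀ σ ∈ Ak k, t^2 ≤ (DD x k σ)^2 := by
      intro σ hσ
      have h1 := (Finset.mem_filter.mp hσ).2.1
      calc t^2 ≤ |DD x k σ|^2 := by apply pow_le_pow_left₀ ht h1
        _ = (DD x k σ)^2 := sq_abs _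
    calc ((Ak k).card : ℝ) * t^2 = ∑ _σ ∈ Ak k, t^2 := by
          rw [Finset.sum_const, nsmul_eq_mul]
      _ ≤ ∑ σ ∈ Ak k, (DD x k σ)^2 := Finset.sum_le_sum this
  -- step 3 : orthogonality
  have step3 : ∀ k' k : ℕ, 1 ≤ k' → k' ≤ k → k ≤ n →
      ∑ σ ∈ Ak k, (DD x k σ / k)^2 ≤ ∑ σ ∈ Ak k, (DD x k' σ / k')^2 := by
    intro k' k h1 h2 h3
    set g : Equiv.Perm (Fin N) → ℝ :=
      fun σ => (DD x k σ / k) * (if σ ∈ Ak k then 1 else 0) with hg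
    have Hg : ∀ σ τ : Equiv.Perm (Fin N), (∀ m : Fin N, k ≤ (m : ℕ) → σ m = τ m) →
        g σ = g τ := by
      intro σ τ hagree
      have hDD : ∀ j, k ≤ j → DD x j σ = DD x j τ := fun j hj => DD_high x k j hj σ τ hagree
      have hmem : (σ ∈ Ak k) = (τ ∈ Ak k) := by
        simp only [hAk, Finset.mem_filter, Finset.mem_univ, true_and, eq_iff_iff]
        have h5 : ∀ j, k < j → j ≤ n → (|DD x j σ| < t ↔ |DD x j τ| < t) := by
          intro j hj1 hj2
          rw [hDD j (le_of_lt hj1)]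
        constructor <;> intro hc <;> constructor
        · rw [← hDD k le_rfl]; exact hc.1
        · intro j hj1 hj2; rw [← h5 j hj1 hj2]; exact hc.2 j hj1 hj2
        · rw [hDD k le_rfl]; exact hc.1
        · intro j hj1 hj2; rw [h5 j hj1 hj2]; exact hc.2 j hj1 hj2
      rw [hg]
      simp only [hDD k le_rfl, hmem]
    have hzero := crossZero x hN0 k' k h1 h2 (le_trans h3 hN) g Hg
    have hsum : ∑ σ ∈ Ak k, (DD x k' σ / k' - DD x k σ / k) * (DD x k σ / k) = 0 := by
      rw [← hzero]
      rw [hAk, Finset.sum_filter]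
      apply Finset.sum_congr rfl
      intro σ _
      by_cases hσ : σ ∈ Ak k
      · have hσ' := (Finset.mem_filter.mp hσ).2
        rw [if_pos hσ']
        simp [hg, hσ]
      · have hσ' : ¬ (t ≤ |DD x k σ| ∧ ∀ j, k < j → j ≤ n → |DD x j σ| < t) := by
          intro hc
          exact hσ (Finset.mem_filter.mpr ⟨Finset.mem_univ _, hc⟩)
        rw [if_neg hσ']
        simp [hg, hσ]
    have hexp : ∀ σ, (DD x k' σ / k')^2 = (DD x k σ / k)^2
        + (DD x k' σ / k' - DD x k σ / k)^2
        + 2 * ((DD x k' σ / k' - DD x k σ / k) * (DD x k σ / k)) := by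
      intro σ; ring
    have hnn : 0 ≤ ∑ σ ∈ Ak k, (DD x k' σ / k' - DD x k σ / k)^2 :=
      Finset.sum_nonneg (fun σ _ => sq_nonneg _)
    have : ∑ σ ∈ Ak k, (DD x k' σ / k')^2 = (∑ σ ∈ Ak k, (DD x k σ / k)^2)
        + (∑ σ ∈ Ak k, (DD x k' σ / k' - DD x k σ / k)^2)
        + 2 * ∑ σ ∈ Ak k, (DD x k' σ / k' - DD x k σ / k) * (DD x k σ / k) := by
      rw [Finset.sum_congr rfl (fun σ (_ : σ ∈ Ak k) => hexp σ), Finset.sum_add_distrib,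
        Finset.sum_add_distrib, Finset.mul_sum]
    rw [this, hsum]
    linarith
  -- main chain
  have hcast : (E.card : ℝ) ≤ ∑ k ∈ Finset.Icc 1 n, ((Ak k).card : ℝ) := by
    have h1 : E.card ≤ ((Finset.Icc 1 n).biUnion Ak).card := Finset.card_le_card cover
    have h2 : ((Finset.Icc 1 n).biUnion Ak).card ≤ ∑ k ∈ Finset.Icc 1 n, (Ak k).card :=
      Finset.card_biUnion_le
    exact_mod_cast le_trans h1 h2
  calc (E.card : ℝ) * t^2
      ≤ (∑ k ∈ Finset.Icc 1 n, ((Ak k).card : ℝ)) * t^2 :=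
        mul_le_mul_of_nonneg_right hcast (sq_nonneg t)
    _ = ∑ k ∈ Finset.Icc 1 n, ((Ak k).card : ℝ) * t^2 := Finset.sum_mul _ _ _
    _ ≤ ∑ k ∈ Finset.Icc 1 n, ∑ σ ∈ Ak k, (DD x k σ)^2 := Finset.sum_le_sum step2
    _ = ∑ k ∈ Finset.Icc 1 n, (k : ℝ)^2 * ∑ σ ∈ Ak k, (DD x k σ / k)^2 := by
        apply Finset.sum_congr rfl
        intro k hk
        have hk0 : (k : ℝ) ≠ 0 := Nat.cast_ne_zero.mpr
          (by have := (Finset.mem_Icc.mp hk).1; omega)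
        rw [Finset.mul_sum]
        apply Finset.sum_congr rfl
        intro σ _
        rw [div_pow]
        field_simp
    _ = ∑ k ∈ Finset.Icc 1 n, ∑ k' ∈ Finset.Icc 1 k,
          (2 * (k' : ℝ) - 1) * ∑ σ ∈ Ak k, (DD x k σ / k)^2 := by
        apply Finset.sum_congr rfl
        intro k _
        rw [← Finset.sum_mul, ← sq_sum_odd k]
    _ ≤ ∑ k ∈ Finset.Icc 1 n, ∑ k' ∈ Finset.Icc 1 k,
          (2 * (k' : ℝ) - 1) * ∑ σ ∈ Ak k, (DD x k' σ / k')^2 := by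
        apply Finset.sum_le_sum
        intro k hk
        apply Finset.sum_le_sum
        intro k' hk'
        have h1 := Finset.mem_Icc.mp hk'
        have h2 := Finset.mem_Icc.mp hk
        have hw : (0:ℝ) ≤ 2 * (k' : ℝ) - 1 := by
          have : (1:ℝ) ≤ (k' : ℝ) := by exact_mod_cast h1.1
          linarith
        exact mul_le_mul_of_nonneg_left (step3 k' k h1.1 h1.2 h2.2) hw
    _ = ∑ k' ∈ Finset.Icc 1 n, ∑ k ∈ Finset.Icc k' n,
          (2 * (k' : ℝ) - 1) * ∑ σ ∈ Ak k, (DD x k' σ / k')^2 := by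
        have hco := Finset.sum_Ico_Ico_comm 1 (n+1)
          (fun i j => (2 * (i : ℝ) - 1) * ∑ σ ∈ Ak j, (DD x i σ / i)^2)
        have h2 : ∀ (a b : ℕ), Finset.Ico a (b+1) = Finset.Icc a b := fun a b => by
          ext m; simp [Nat.lt_succ_iff]
        simp_rw [h2] at hco
        exact hco.symm
    _ ≤ ∑ k' ∈ Finset.Icc 1 n,
          (2 * (k' : ℝ) - 1) * ∑ σ : Equiv.Perm (Fin N), (DD x k' σ / k')^2 := by
        apply Finset.sum_le_sum
        intro k' hk'
        have h1 := Finset.mem_Icc.mp hk'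
        have hw : (0:ℝ) ≤ 2 * (k' : ℝ) - 1 := by
          have : (1:ℝ) ≤ (k' : ℝ) := by exact_mod_cast h1.1
          linarith
        rw [← Finset.mul_sum]
        apply mul_le_mul_of_nonneg_left _ hw
        have hdisj' : ∀ a ∈ (Finset.Icc k' n : Finset ℕ), ∀ b ∈ (Finset.Icc k' n : Finset ℕ),
            a ≠ b → Disjoint (Ak a) (Ak b) := by
          intro a ha b hb hab
          have ha' : a ∈ Finset.Icc 1 n := by
            have := Finset.mem_Icc.mp ha
            exact Finset.mem_Icc.mpr ⟨by omega, this.2⟩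
          have hb' : b ∈ Finset.Icc 1 n := by
            have := Finset.mem_Icc.mp hb
            exact Finset.mem_Icc.mpr ⟨by omega, this.2⟩
          exact disj a ha' b hb' hab
        rw [← Finset.sum_biUnion hdisj']
        apply Finset.sum_le_sum_of_subset_of_nonneg (Finset.subset_univ _)
        intro σ _ _
        exact sq_nonneg _
    _ ≤ ∑ _k' ∈ Finset.Icc 1 n, (Nat.factorial N : ℝ) / 2 := by
        apply Finset.sum_le_sum
        intro k' hk'
        have h1 := Finset.mem_Icc.mp hk'
        have hk'N : k' ≤ N := le_trans h1.2 hN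
        have hD := Dsq x hN0 hx k' hk'N
        have hk0 : (0:ℝ) < (k' : ℝ) := by exact_mod_cast h1.1
        have hk1 : (1:ℝ) ≤ (k' : ℝ) := by exact_mod_cast h1.1
        have hw : (0:ℝ) ≤ 2 * (k' : ℝ) - 1 := by linarith
        have hsq : ∑ σ : Equiv.Perm (Fin N), (DD x k' σ / k')^2
            = (∑ σ : Equiv.Perm (Fin N), (DD x k' σ)^2) / (k' : ℝ)^2 := by
          rw [Finset.sum_div]
          exact Finset.sum_congr rfl (fun σ _ => div_pow _ _ _)
        rw [hsq]
        have hSnn : (0:ℝ) ≤ ∑ σ : Equiv.Perm (Fin N), (DD x k' σ)^2 :=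
          Finset.sum_nonneg (fun σ _ => sq_nonneg _)
        have h7 : (2 * (k':ℝ) - 1) * ((∑ σ : Equiv.Perm (Fin N), (DD x k' σ)^2) / (k':ℝ)^2)
            = ((2 * (k':ℝ) - 1) * ∑ σ : Equiv.Perm (Fin N), (DD x k' σ)^2) / (k':ℝ)^2 := by
          ring
        rw [h7, div_le_iff₀ (by positivity : (0:ℝ) < (k':ℝ)^2)]
        have h8 : (2 * (k':ℝ) - 1) * (∑ σ : Equiv.Perm (Fin N), (DD x k' σ)^2)
            ≤ (2 * (k':ℝ) - 1) * ((Nat.factorial N : ℝ) * ((k':ℝ) / 4)) :=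
          mul_le_mul_of_nonneg_left hD hw
        have hfnn : (0:ℝ) ≤ (Nat.factorial N : ℝ) := Nat.cast_nonneg _
        nlinarith [mul_nonneg hfnn (le_of_lt hk0)]
    _ = (Nat.factorial N : ℝ) * (n / 2) := by
        rw [Finset.sum_const, Nat.card_Icc, nsmul_eq_mul]
        simp only [Nat.add_sub_cancel]
        ring

end Stmt3

/-- Sampling without replacement is modeled by a uniformly random permutation `σ`
of the population indices; `X i = x (σ i)` and `S k = ∑_{i < k} X i`. -/
theorem stmt_3 (N n : ℕ) (hn : 1 ≤ n) (hN : n ≤ N) (hNpos : 0 < N)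
    (x : Fin N → ℝ) (hx : ∀ i, x i = 0 ∨ x i = 1) (θ : ℝ) (hθ : 0 < θ) :
    @PMF.toMeasure _ ⊤ (PMF.uniformOfFintype (Equiv.Perm (Fin N)))
      {σ : Equiv.Perm (Fin N) | ∃ k, 1 ≤ k ∧ k ≤ n ∧
        Real.sqrt (n * θ) ≤
          |(∑ i : Fin N, if (i : ℕ) < k then x (σ i) else 0) -
            ((∑ i : Fin N, x i) / N) * k|}
      ≤ ENNReal.ofReal (1 / θ) := by
  classical
  set t := Real.sqrt (n * θ) with htdef
  have ht0 : 0 ≤ t := Real.sqrt_nonneg _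
  have ht2 : t ^ 2 = n * θ := Real.sq_sqrt (by positivity)
  have key := Stmt3.main_bound x hNpos hx n hn hN t ht0
  rw [ht2] at key
  set E := Finset.univ.filter (fun σ : Equiv.Perm (Fin N) =>
    ∃ k, 1 ≤ k ∧ k ≤ n ∧ t ≤ |Stmt3.DD x k σ|) with hE
  have hn' : (0:ℝ) < n := by
    have : 0 < n := hn
    exact_mod_cast this
  have hfact_pos : (0:ℝ) < (Nat.factorial N : ℝ) := by
    exact_mod_cast Nat.factorial_pos N
  have hcard : (E.card : ℝ) * θ ≤ (Nat.factorial N : ℝ) / 2 := by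
    have h1 : (n:ℝ) * ((E.card : ℝ) * θ) ≤ (n:ℝ) * ((Nat.factorial N : ℝ) / 2) := by
      calc (n:ℝ) * ((E.card : ℝ) * θ) = (E.card : ℝ) * ((n:ℝ) * θ) := by ring
        _ ≤ (Nat.factorial N : ℝ) * ((n:ℝ) / 2) := key
        _ = (n:ℝ) * ((Nat.factorial N : ℝ) / 2) := by ring
    exact le_of_mul_le_mul_left h1 hn'
  have hfinal : (E.card : ℝ) / (Nat.factorial N : ℝ) ≤ 1 / θ := by
    rw [div_le_div_iff₀ hfact_pos hθ]
    nlinarith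
  -- measure computation
  letI : MeasurableSpace (Equiv.Perm (Fin N)) := ⊤
  set A : Set (Equiv.Perm (Fin N)) := {σ : Equiv.Perm (Fin N) | ∃ k, 1 ≤ k ∧ k ≤ n ∧
        t ≤ |(∑ i : Fin N, if (i : ℕ) < k then x (σ i) else 0) -
            ((∑ i : Fin N, x i) / N) * k|} with hA
  show (PMF.uniformOfFintype (Equiv.Perm (Fin N))).toMeasure A ≤ ENNReal.ofReal (1 / θ)
  rw [PMF.toMeasure_apply_fintype]
  have hAE : ∀ σ : Equiv.Perm (Fin N), σ ∈ A ↔ σ ∈ E := by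
    intro σ
    simp only [hA, Set.mem_setOf_eq, hE, Finset.mem_filter, Finset.mem_univ, true_and]
    rfl
  have h9 : ∀ σ : Equiv.Perm (Fin N),
      A.indicator (⇑(PMF.uniformOfFintype (Equiv.Perm (Fin N)))) σ
        = if σ ∈ E then ((Nat.factorial N : ℝ≥0∞))⁻¹ else 0 := by
    intro σ
    rw [Set.indicator_apply]
    by_cases hσ : σ ∈ E
    · rw [if_pos ((hAE σ).mpr hσ), if_pos hσ, PMF.uniformOfFintype_apply,
        Fintype.card_perm, Fintype.card_fin]
    · rw [if_neg (fun hc => hσ ((hAE σ).mp hc)), if_neg hσ]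
  rw [Finset.sum_congr rfl (fun σ _ => h9 σ)]
  rw [Finset.sum_ite_mem, Finset.univ_inter, Finset.sum_const, nsmul_eq_mul]
  have hconv : (E.card : ℝ≥0∞) * ((Nat.factorial N : ℝ≥0∞))⁻¹
      = ENNReal.ofReal ((E.card : ℝ) / (Nat.factorial N : ℝ)) := by
    rw [ENNReal.ofReal_div_of_pos hfact_pos, ENNReal.ofReal_natCast, ENNReal.ofReal_natCast,
      div_eq_mul_inv]
  rw [hconv]
  exact ENNReal.ofReal_le_ofReal hfinal
end

section
/- Let B₁, …, Bₙ be i.i.d. Bernoulli(p) random variables with p ∈ [0,1], and define P = (1 + ∑_{j=1}^n B_j)/(n+1). If p is itself distributed uniformly on {1/S, …, 1} (or more generally stochastically greater than uniform on [0,1]) then P is stochastically greater than the uniform distribution on [0,1]: for all t ∈ [0,1], ℙ(P ≤ t) ≤ t. -/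
open MeasureTheory
open scoped ENNReal



noncomputable def mc5_hsum (n m : ℕ) (p : ℝ) : ℝ :=
  ∑ k ∈ Finset.range (m + 1), p ^ k * (1 - p) ^ (n - k) * (n.choose k : ℝ)

noncomputable def mc5_gfun (n m : ℕ) (x : ℝ) : ℝ :=
  (n : ℝ) * ((n - 1).choose m : ℝ) * (x ^ m * (1 - x) ^ (n - 1 - m))

lemma mc5_continuous_gfun (n m : ℕ) : Continuous (mc5_gfun n m) := by
  unfold mc5_gfun; fun_prop

lemma mc5_gfun_nonneg {n m : ℕ} {x : ℝ} (h0 : 0 ≤ x) (h1 : x ≤ 1) : 0 ≤ mc5_gfun n m x := by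
  unfold mc5_gfun
  have : (0:ℝ) ≤ 1 - x := by linarith
  positivity

lemma mc5_hasDerivAt_term (n k : ℕ) (c : ℝ) (p : ℝ) :
    HasDerivAt (fun p : ℝ => p ^ k * (1 - p) ^ (n - k) * c)
      (((k : ℝ) * p ^ (k - 1) * (1 - p) ^ (n - k)
        - ((n - k : ℕ) : ℝ) * p ^ k * (1 - p) ^ (n - k - 1)) * c) p := by
  have h1 : HasDerivAt (fun q : ℝ => (1 - q) ^ (n - k))
      (((n - k : ℕ) : ℝ) * (1 - p) ^ (n - k - 1) * (-1)) p := by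
    have hb : HasDerivAt (fun q : ℝ => 1 - q) (-1) p := (hasDerivAt_id p).const_sub 1
    exact (hasDerivAt_pow (n - k) (1 - p)).comp p hb
  have h2 := ((hasDerivAt_pow k p).mul h1).mul_const c
  refine HasDerivAt.congr_deriv h2 ?_
  ring



lemma mc5_natA {n m : ℕ} (hm : m < n) : (m + 1) * n.choose (m + 1) = n * (n - 1).choose m := by
  obtain ⟨j, rfl⟩ : ∃ j, n = j + 1 := ⟨n - 1, by omega⟩
  have := Nat.add_one_mul_choose_eq j m
  simpa [Nat.mul_comm] using this.symm

lemma mc5_natB {n m : ℕ} (hm : m < n) :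
    (n - (m + 1)) * n.choose (m + 1) = n * (n - 1).choose (m + 1) := by
  rcases eq_or_lt_of_le (show m + 1 ≤ n from hm) with h | h
  · subst h
    simp [Nat.choose_eq_zero_of_lt (Nat.lt_succ_self m)]
  · have h1 : n.choose (m + 1) = n.choose (n - (m + 1)) := (Nat.choose_symm hm).symm
    have h2 : n - (m + 1) = (n - m - 2) + 1 := by omega
    have h3 := mc5_natA (show n - m - 2 < n by omega)
    have h4 : (n - 1).choose (n - m - 2) = (n - 1).choose (m + 1) := by
      rw [← Nat.choose_symm (show n - m - 2 ≤ n - 1 by omega)]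
      congr 1
      omega
    rw [h1, h2, h3, h4]

lemma mc5_sumD (n : ℕ) (p : ℝ) : ∀ m, m < n →
    (∑ k ∈ Finset.range (m + 1),
      ((k : ℝ) * p ^ (k - 1) * (1 - p) ^ (n - k)
        - ((n - k : ℕ) : ℝ) * p ^ k * (1 - p) ^ (n - k - 1)) * (n.choose k : ℝ))
      = -(mc5_gfun n m p)
  | 0, h0 => by
      rw [Finset.sum_range_one]
      unfold mc5_gfun
      simp
  | (m + 1), hm1 => by
      have hm : m < n := by omega
      rw [Finset.sum_range_succ, mc5_sumD n p m hm]
      unfold mc5_gfun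
      have cA : ((m : ℝ) + 1) * (n.choose (m + 1) : ℝ)
          = (n : ℝ) * ((n - 1).choose m : ℝ) := by exact_mod_cast mc5_natA hm
      have cB : (((n - (m + 1) : ℕ)) : ℝ) * (n.choose (m + 1) : ℝ)
          = (n : ℝ) * ((n - 1).choose (m + 1) : ℝ) := by exact_mod_cast mc5_natB hm
      have e1 : n - (m + 1) = n - 1 - m := by omega
      have e2 : n - (m + 1) - 1 = n - 1 - (m + 1) := by omega
      rw [e2]
      push_cast
      rw [e1] at cB ⊢
      linear_combination (p ^ m * (1 - p) ^ (n - 1 - m)) * cA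
        - (p ^ (m + 1) * (1 - p) ^ (n - 1 - (m + 1))) * cB

lemma mc5_hasDerivAt_hsum {n m : ℕ} (hm : m < n) (p : ℝ) :
    HasDerivAt (mc5_hsum n m) (-(mc5_gfun n m p)) p := by
  have h := HasDerivAt.fun_sum (u := Finset.range (m + 1)) (fun k _ => mc5_hasDerivAt_term n k (n.choose k : ℝ) p)
  rw [mc5_sumD n p m hm] at h
  exact h

lemma mc5_hsum_one {n m : ℕ} (hm : m < n) : mc5_hsum n m 1 = 0 := by
  unfold mc5_hsum
  apply Finset.sum_eq_zero
  intro k hk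
  have : n - k ≠ 0 := by
    simp only [Finset.mem_range] at hk
    omega
  simp [this]

lemma mc5_hsum_eq {n m : ℕ} (hm : m < n) (p : ℝ) :
    mc5_hsum n m p = ∫ x in p..1, mc5_gfun n m x := by
  have hftc := intervalIntegral.integral_eq_sub_of_hasDerivAt
    (f := mc5_hsum n m) (f' := fun x => -(mc5_gfun n m x)) (a := p) (b := 1)
    (fun x _ => mc5_hasDerivAt_hsum hm x)
    (((mc5_continuous_gfun n m).neg).intervalIntegrable p 1)
  rw [mc5_hsum_one hm] at hftc
  rw [intervalIntegral.integral_neg] at hftc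
  linarith [hftc]




lemma mc5_prod_aux (a : ℕ) : ∀ b : ℕ,
    ∏ j ∈ Finset.range (b + 1), ((a : ℝ) + 1 + j) = (a + b + 1).factorial / a.factorial
  | 0 => by
      simp [Nat.factorial_succ]
      field_simp
  | (b + 1) => by
      rw [Finset.prod_range_succ, mc5_prod_aux a b]
      have h1 : (a + (b + 1) + 1).factorial = (a + b + 2) * (a + b + 1).factorial := by
        rw [show a + (b + 1) + 1 = (a + b + 1) + 1 by omega, Nat.factorial_succ]
      rw [h1]
      push_cast
      field_simp
      ring

lemma mc5_beta_nat (a b : ℕ) :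
    ∫ x in (0:ℝ)..1, x ^ a * (1 - x) ^ b
      = (a.factorial * b.factorial : ℝ) / (a + b + 1).factorial := by
  have hu : 0 < Complex.re ((a : ℂ) + 1) := by
    simp only [Complex.add_re, Complex.natCast_re, Complex.one_re]
    positivity
  have h := Complex.betaIntegral_eval_nat_add_one_right hu b
  rw [Complex.betaIntegral] at h
  have hint : (∫ x in (0:ℝ)..1, ((x : ℂ)) ^ ((a : ℂ) + 1 - 1) * (1 - (x : ℂ)) ^ ((b : ℂ) + 1 - 1))
      = ((∫ x in (0:ℝ)..1, x ^ a * (1 - x) ^ b : ℝ) : ℂ) := by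
    rw [← intervalIntegral.integral_ofReal]
    apply intervalIntegral.integral_congr
    intro x _
    dsimp only
    have e1 : ((a : ℂ) + 1 - 1) = ((a : ℕ) : ℂ) := by ring
    have e2 : ((b : ℂ) + 1 - 1) = ((b : ℕ) : ℂ) := by ring
    rw [e1, e2, Complex.cpow_natCast, Complex.cpow_natCast]
    push_cast
    ring
  rw [hint] at h
  have hprod : (∏ j ∈ Finset.range (b + 1), ((a : ℂ) + 1 + j))
      = (((a + b + 1).factorial / a.factorial : ℝ) : ℂ) := by
    rw [← mc5_prod_aux a b]
    push_cast
    rfl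
  rw [hprod] at h
  have := h
  rw [show ((b.factorial : ℂ)) = (((b.factorial : ℝ)) : ℂ) by push_cast; rfl] at this
  rw [← Complex.ofReal_div] at this
  have hr : (∫ x in (0:ℝ)..1, x ^ a * (1 - x) ^ b)
      = (b.factorial : ℝ) / ((a + b + 1).factorial / a.factorial) := by
    exact_mod_cast this
  rw [hr]
  have h0 : (a.factorial : ℝ) ≠ 0 := by positivity
  have h0' : ((a + b + 1).factorial : ℝ) ≠ 0 := by positivity
  field_simp


lemma mc5_integral_xg {n m : ℕ} (hm : m < n) :
    ∫ x in (0:ℝ)..1, x * mc5_gfun n m x = ((m : ℝ) + 1) / ((n : ℝ) + 1) := by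
  obtain ⟨j, rfl⟩ : ∃ j, n = j + 1 := ⟨n - 1, by omega⟩
  have hmj : m ≤ j := by omega
  have h1 : (fun x : ℝ => x * mc5_gfun (j + 1) m x)
      = fun x : ℝ => ((j : ℝ) + 1) * ((j.choose m : ℝ)) * (x ^ (m + 1) * (1 - x) ^ (j - m)) := by
    funext x
    unfold mc5_gfun
    have e : j + 1 - 1 - m = j - m := by omega
    rw [e]
    push_cast
    ring
  rw [show (∫ x in (0:ℝ)..1, x * mc5_gfun (j + 1) m x)
      = ∫ x in (0:ℝ)..1, ((j : ℝ) + 1) * ((j.choose m : ℝ)) * (x ^ (m + 1) * (1 - x) ^ (j - m))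
    from by rw [h1]]
  rw [intervalIntegral.integral_const_mul, mc5_beta_nat (m + 1) (j - m)]
  have e2 : m + 1 + (j - m) + 1 = j + 2 := by omega
  rw [e2]
  have ckey : ((j.choose m : ℝ)) * (m.factorial : ℝ) * ((j - m).factorial : ℝ)
      = (j.factorial : ℝ) := by
    exact_mod_cast congrArg (Nat.cast (R := ℝ)) (Nat.choose_mul_factorial_mul_factorial hmj)
  have hf1 : ((m + 1).factorial : ℝ) = ((m : ℝ) + 1) * (m.factorial : ℝ) := by
    rw [Nat.factorial_succ]; push_cast; ring
  have hf2 : ((j + 2).factorial : ℝ) = ((j : ℝ) + 2) * (((j : ℝ) + 1) * (j.factorial : ℝ)) := by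
    rw [show j + 2 = (j + 1) + 1 from rfl, Nat.factorial_succ, Nat.factorial_succ]
    push_cast; ring
  rw [hf1, hf2]
  have hjf : (j.factorial : ℝ) ≠ 0 := by positivity
  have hmf : (m.factorial : ℝ) ≠ 0 := by positivity
  have hjmf : ((j - m).factorial : ℝ) ≠ 0 := by positivity
  rw [← ckey]
  have hc : (j.choose m : ℝ) ≠ 0 := Nat.cast_ne_zero.2 (Nat.choose_pos hmj).ne'
  field_simp
  push_cast
  ring



/-- The Monte Carlo p-value `P = (1 + Binomial(n, p))/(n+1)` (the sum of `n` i.i.d.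
Bernoulli(p) samples is Binomial(n, p)), where the ideal p-value `p` is drawn from
a super-uniform distribution `μ` supported on `[0,1]`, is itself super-uniform. -/
theorem stmt_5 (n : ℕ) (μ : Measure ℝ) [IsProbabilityMeasure μ]
    (hsupp : μ (Set.Icc 0 1) = 1)
    (hsuper : ∀ t ∈ Set.Icc (0 : ℝ) 1, μ (Set.Iic t) ≤ ENNReal.ofReal t)
    (t : ℝ) (ht : t ∈ Set.Icc (0 : ℝ) 1) :
    (μ.bind fun p =>
        ((PMF.binomial (min (Real.toNNReal p) 1) (min_le_right _ _) n).toMeasure.map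
          fun k : Fin (n + 1) => (1 + ((k : ℕ) : ℝ)) / ((n : ℝ) + 1)))
      (Set.Iic t) ≤ ENNReal.ofReal t := by
  classical
  obtain ⟨ht0, ht1⟩ := ht
  set fmap : Fin (n + 1) → ℝ := fun k => (1 + ((k : ℕ) : ℝ)) / ((n : ℝ) + 1) with hfmap
  have hfmeas : Measurable fmap := measurable_from_top
  set κ : ℝ → Measure ℝ := fun p =>
    ((PMF.binomial (min (Real.toNNReal p) 1) (min_le_right _ _) n).toMeasure.map fmap) with hκ
  have hker : Measurable κ := by
    apply Measure.measurable_of_measurable_coe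
    intro s hs
    simp only [hκ]
    have : (fun p => ((PMF.binomial (min (Real.toNNReal p) 1) (min_le_right _ _) n).toMeasure.map
        fmap) s)
        = fun p => ∑ k : Fin (n + 1),
          Set.indicator (fmap ⁻¹' s)
            (⇑(PMF.binomial (min (Real.toNNReal p) 1) (min_le_right _ _) n)) k := by
      funext p
      rw [Measure.map_apply hfmeas hs,
        PMF.toMeasure_apply _ (hfmeas hs), tsum_fintype]
    rw [this]
    apply Finset.measurable_sum
    intro k _
    by_cases hk : k ∈ fmap ⁻¹' s
    · simp only [Set.indicator_of_mem hk, PMF.binomial_apply]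
      fun_prop
    · simp [Set.indicator_of_notMem hk]
  rw [Measure.bind_apply measurableSet_Iic hker.aemeasurable]
  have hn1 : (0:ℝ) < (n : ℝ) + 1 := by positivity
  -- case t = 1
  rcases eq_or_lt_of_le ht1 with rfl | htlt
  · calc ∫⁻ p, κ p (Set.Iic 1) ∂μ ≤ ∫⁻ _, 1 ∂μ := by
          apply lintegral_mono
          intro p
          haveI : IsProbabilityMeasure (κ p) := Measure.isProbabilityMeasure_map hfmeas.aemeasurable
          exact prob_le_one
      _ ≤ ENNReal.ofReal 1 := by simp
  -- now t < 1
  set M : ℕ := Nat.floor (t * ((n : ℝ) + 1)) with hM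
  have htn0 : 0 ≤ t * ((n : ℝ) + 1) := by positivity
  have hmem : ∀ k : Fin (n + 1), (fmap k ≤ t ↔ (k : ℕ) + 1 ≤ M) := by
    intro k
    rw [hfmap]
    simp only
    rw [div_le_iff₀ hn1, hM, Nat.le_floor_iff htn0]
    push_cast
    constructor <;> intro h <;> linarith
  have hMle : M ≤ n := by
    have : M < n + 1 := by
      rw [hM, Nat.floor_lt htn0]
      push_cast
      nlinarith
    omega
  rcases Nat.eq_zero_or_pos M with hM0 | hMpos
  · have hempty : ∀ p, κ p (Set.Iic t) = 0 := by
      intro p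
      rw [hκ]
      simp only
      rw [Measure.map_apply hfmeas measurableSet_Iic]
      have : fmap ⁻¹' Set.Iic t = ∅ := by
        ext k
        simp only [Set.mem_preimage, Set.mem_Iic, Set.mem_empty_iff_false, iff_false]
        rw [hmem k]
        omega
      rw [this]
      simp
    simp only [hempty]
    simp
  -- main case
  set m : ℕ := M - 1 with hm
  have hMm : M = m + 1 := by omega
  have hmn : m < n := by omega
  have hκval : ∀ p ∈ Set.Icc (0:ℝ) 1, κ p (Set.Iic t) = ENNReal.ofReal (mc5_hsum n m p) := by
    intro p hp
    rw [hκ]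
    simp only
    rw [Measure.map_apply hfmeas measurableSet_Iic,
      PMF.toMeasure_apply _ (hfmeas measurableSet_Iic), tsum_fintype]
    have hq : min (Real.toNNReal p) 1 = Real.toNNReal p :=
      min_eq_left (Real.toNNReal_le_one.2 hp.2)
    have hstep : ∀ k : Fin (n + 1),
        Set.indicator (fmap ⁻¹' Set.Iic t)
          (⇑(PMF.binomial (min (Real.toNNReal p) 1) (min_le_right _ _) n)) k
        = if (k : ℕ) + 1 ≤ M then
            ENNReal.ofReal (p ^ (k : ℕ) * (1 - p) ^ (n - (k : ℕ)) * (n.choose (k : ℕ) : ℝ))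
          else 0 := by
      intro k
      rw [Set.indicator_apply]
      have hcond : (k ∈ fmap ⁻¹' Set.Iic t) = ((k : ℕ) + 1 ≤ M) := by
        simp only [Set.mem_preimage, Set.mem_Iic]
        rw [hmem k]
      rw [hcond]
      congr 1
      rw [PMF.binomial_apply, hq]
      simp only [Fin.val_last]
      have h1p : (0:ℝ) ≤ 1 - p := by linarith [hp.2]
      have hp0 : (0:ℝ) ≤ p := hp.1
      rw [ENNReal.ofReal_mul (by positivity), ENNReal.ofReal_mul (by positivity),
        ENNReal.ofReal_pow hp.1, ENNReal.ofReal_pow h1p, ENNReal.ofReal_natCast]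
      congr 1
      rw [ENNReal.ofReal_sub 1 hp.1]
      simp
      rfl
    calc (∑ k : Fin (n + 1), Set.indicator (fmap ⁻¹' Set.Iic t)
          (⇑(PMF.binomial (min (Real.toNNReal p) 1) (min_le_right _ _) n)) k)
        = ∑ k : Fin (n + 1), (if (k : ℕ) + 1 ≤ M then
            ENNReal.ofReal (p ^ (k : ℕ) * (1 - p) ^ (n - (k : ℕ)) * (n.choose (k : ℕ) : ℝ))
          else 0) := Finset.sum_congr rfl (fun k _ => hstep k)
      _ = ∑ i ∈ Finset.range (n + 1), (if i + 1 ≤ M then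
            ENNReal.ofReal (p ^ i * (1 - p) ^ (n - i) * (n.choose i : ℝ)) else 0) :=
          Fin.sum_univ_eq_sum_range (fun i => if i + 1 ≤ M then
            ENNReal.ofReal (p ^ i * (1 - p) ^ (n - i) * (n.choose i : ℝ)) else 0) (n + 1)
      _ = ∑ i ∈ Finset.range M, (if i + 1 ≤ M then
            ENNReal.ofReal (p ^ i * (1 - p) ^ (n - i) * (n.choose i : ℝ)) else 0) :=
          (Finset.sum_subset (Finset.range_subset_range.2 (by omega)) (by
            intro x _ hx
            simp only [Finset.mem_range, not_lt] at hx
            rw [if_neg (by omega)])).symm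
      _ = ∑ i ∈ Finset.range M,
            ENNReal.ofReal (p ^ i * (1 - p) ^ (n - i) * (n.choose i : ℝ)) := by
          apply Finset.sum_congr rfl
          intro i hi
          simp only [Finset.mem_range] at hi
          rw [if_pos (by omega)]
      _ = ENNReal.ofReal (mc5_hsum n m p) := by
          rw [hMm, mc5_hsum]
          rw [ENNReal.ofReal_sum_of_nonneg]
          intro i _
          have h1p : (0:ℝ) ≤ 1 - p := by linarith [hp.2]
          have := hp.1
          positivity
  have haemem : ∀ᵐ p ∂μ, p ∈ Set.Icc (0:ℝ) 1 := by
    rw [MeasureTheory.ae_iff]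
    have hcompl : {p : ℝ | ¬ p ∈ Set.Icc (0:ℝ) 1} = (Set.Icc (0:ℝ) 1)ᶜ := rfl
    rw [hcompl, measure_compl measurableSet_Icc (measure_ne_top _ _), hsupp, measure_univ]
    simp
  set Fu : ℝ × ℝ → ℝ≥0∞ :=
    Set.indicator {q : ℝ × ℝ | q.1 < q.2 ∧ q.2 ≤ 1} (fun q => ENNReal.ofReal (mc5_gfun n m q.2))
    with hFu
  have hFumeas : Measurable Fu := by
    apply Measurable.indicator
    · exact ENNReal.measurable_ofReal.comp ((mc5_continuous_gfun n m).measurable.comp measurable_snd)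
    · exact (measurableSet_lt measurable_fst measurable_snd).inter
        (measurableSet_le measurable_snd measurable_const)
  have key1 : ∫⁻ p, κ p (Set.Iic t) ∂μ = ∫⁻ p, ∫⁻ x, Fu (p, x) ∂volume ∂μ := by
    apply lintegral_congr_ae
    filter_upwards [haemem] with p hp
    rw [hκval p hp]
    have step1 : mc5_hsum n m p = ∫ x in Set.Ioc p 1, mc5_gfun n m x := by
      rw [mc5_hsum_eq hmn p, intervalIntegral.integral_of_le hp.2]
    rw [step1]
    have hint : IntegrableOn (mc5_gfun n m) (Set.Ioc p 1) volume :=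
      (mc5_continuous_gfun n m).integrableOn_Ioc
    have hnn : 0 ≤ᵐ[volume.restrict (Set.Ioc p 1)] (mc5_gfun n m) :=
      MeasureTheory.ae_restrict_of_forall_mem measurableSet_Ioc
        (fun x hx => mc5_gfun_nonneg (le_trans hp.1 hx.1.le) hx.2)
    rw [MeasureTheory.ofReal_integral_eq_lintegral_ofReal hint hnn]
    rw [← MeasureTheory.lintegral_indicator measurableSet_Ioc]
    apply lintegral_congr
    intro x
    rw [hFu]
    simp only [Set.indicator_apply, Set.mem_Ioc, Set.mem_setOf_eq]
  rw [key1]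
  have hswap := MeasureTheory.lintegral_lintegral_swap (μ := μ) (ν := (volume : Measure ℝ))
    (f := fun p x => Fu (p, x))
    (show AEMeasurable (Function.uncurry fun p x => Fu (p, x)) (μ.prod volume) from
      hFumeas.aemeasurable)
  rw [hswap]
  have key3 : ∀ x : ℝ, (∫⁻ p, Fu (p, x) ∂μ)
      ≤ Set.indicator (Set.Ioc (0:ℝ) 1) (fun x => ENNReal.ofReal (x * mc5_gfun n m x)) x := by
    intro x
    by_cases hx1 : x ≤ 1
    · have hfun : (fun p => Fu (p, x))
          = fun p => Set.indicator (Set.Iio x) (fun _ => ENNReal.ofReal (mc5_gfun n m x)) p := by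
        funext p
        rw [hFu]
        simp only [Set.indicator_apply, Set.mem_setOf_eq, Set.mem_Iio, hx1, and_true]
      rw [hfun, MeasureTheory.lintegral_indicator_const measurableSet_Iio]
      by_cases hx0 : 0 < x
      · rw [Set.indicator_of_mem (Set.mem_Ioc.2 ⟨hx0, hx1⟩)]
        have hμx : μ (Set.Iio x) ≤ ENNReal.ofReal x :=
          le_trans (measure_mono Set.Iio_subset_Iic_self) (hsuper x ⟨hx0.le, hx1⟩)
        calc ENNReal.ofReal (mc5_gfun n m x) * μ (Set.Iio x)
            ≤ ENNReal.ofReal (mc5_gfun n m x) * ENNReal.ofReal x := mul_le_mul_right hμx _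
          _ = ENNReal.ofReal (x * mc5_gfun n m x) := by
              rw [← ENNReal.ofReal_mul (mc5_gfun_nonneg hx0.le hx1)]
              ring_nf
      · push_neg at hx0
        have hμ0 : μ (Set.Iio x) = 0 := by
          apply le_antisymm _ zero_le
          calc μ (Set.Iio x) ≤ μ (Set.Iic 0) :=
                measure_mono (fun y hy => le_trans (le_of_lt hy) hx0)
            _ ≤ ENNReal.ofReal 0 := hsuper 0 ⟨le_refl 0, zero_le_one⟩
            _ = 0 := by simp
        rw [hμ0, mul_zero]
        exact zero_le
    · have hfun : (fun p => Fu (p, x)) = fun _ => (0 : ℝ≥0∞) := by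
        funext p
        rw [hFu, Set.indicator_of_notMem]
        simp only [Set.mem_setOf_eq]
        push_neg
        intro
        linarith
      rw [hfun]
      simp
  calc ∫⁻ x, ∫⁻ p, Fu (p, x) ∂μ ∂volume
      ≤ ∫⁻ x, Set.indicator (Set.Ioc (0:ℝ) 1)
          (fun x => ENNReal.ofReal (x * mc5_gfun n m x)) x ∂volume := lintegral_mono key3
    _ = ∫⁻ x in Set.Ioc (0:ℝ) 1, ENNReal.ofReal (x * mc5_gfun n m x) ∂volume :=
        MeasureTheory.lintegral_indicator measurableSet_Ioc _
    _ = ENNReal.ofReal (∫ x in Set.Ioc (0:ℝ) 1, x * mc5_gfun n m x ∂volume) := by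
        rw [MeasureTheory.ofReal_integral_eq_lintegral_ofReal]
        · exact (continuous_id.mul (mc5_continuous_gfun n m)).integrableOn_Ioc
        · exact MeasureTheory.ae_restrict_of_forall_mem measurableSet_Ioc
            (fun x hx => mul_nonneg hx.1.le (mc5_gfun_nonneg hx.1.le hx.2))
    _ = ENNReal.ofReal (((m : ℝ) + 1) / ((n : ℝ) + 1)) := by
        rw [← intervalIntegral.integral_of_le zero_le_one, mc5_integral_xg hmn]
    _ ≤ ENNReal.ofReal t := by
        apply ENNReal.ofReal_le_ofReal
        rw [div_le_iff₀ hn1]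
        have hfl : (M : ℝ) ≤ t * ((n : ℝ) + 1) := Nat.floor_le htn0
        rw [hMm] at hfl
        push_cast at hfl
        linarith
end

section
/- Let r* be the BH critical rank for sorted p-values p_(1) ≤ ⋯ ≤ p_(m) with level α, and τ* = (r*/m)·α. Suppose r̂ ∈ {r*, …, m} satisfies: exactly m − r̂ of the p-values are strictly greater than (r̂/m)·α, and the remaining r̂ p-values are at most (r̂/m)·α. Then r̂ = r*. -/
theorem stmt_8 (m : ℕ) (hm : 1 ≤ m) (α : ℝ) (hα : α ∈ Set.Ioo (0 : ℝ) 1)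
    (p : ℕ → ℝ) (hmono : MonotoneOn p (Set.Icc 1 m))
    (hp : ∀ i ∈ Set.Icc 1 m, p i ∈ Set.Icc (0 : ℝ) 1)
    (rstar : ℕ)
    (hr : rstar = sSup {r : ℕ | r ∈ Set.Icc 1 m ∧ p r ≤ (r : ℝ) / m * α})
    (rhat : ℕ) (h1 : rstar ≤ rhat) (h2 : rhat ≤ m)
    (hcount : Set.ncard {i | i ∈ Set.Icc 1 m ∧ (rhat : ℝ) / m * α < p i} = m - rhat)
    (hrest : ∀ i ∈ Set.Icc 1 m,
      (rhat : ℝ) / m * α < p i ∨ p i ≤ (rhat : ℝ) / m * α) :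
    rhat = rstar := by
  rcases Nat.eq_zero_or_pos rhat with h0 | hpos
  · omega
  · -- show p rhat ≤ τ̂
    have hr1 : rhat ∈ Set.Icc 1 m := ⟨hpos, h2⟩
    by_contra hne
    have hlt : rstar < rhat := lt_of_le_of_ne h1 (fun h => hne h.symm)
    have hple : p rhat ≤ (rhat : ℝ) / m * α := by
      by_contra hgt
      push_neg at hgt
      -- then Icc rhat m ⊆ the exceed set
      have hsub : Set.Icc rhat m ⊆
          {i | i ∈ Set.Icc 1 m ∧ (rhat : ℝ) / m * α < p i} := by
        intro i hi
        have hi1 : i ∈ Set.Icc 1 m := ⟨le_trans hpos hi.1, hi.2⟩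
        exact ⟨hi1, lt_of_lt_of_le hgt (hmono hr1 hi1 hi.1)⟩
      have hfin : {i | i ∈ Set.Icc 1 m ∧ (rhat : ℝ) / m * α < p i}.Finite :=
        (Set.finite_Icc 1 m).subset (fun i hi => hi.1)
      have hcard := Set.ncard_le_ncard hsub hfin
      have hicc : (Set.Icc rhat m).ncard = m + 1 - rhat := by
        rw [← Nat.card_coe_set_eq]
        simp [Nat.card_Icc]
      rw [hicc, hcount] at hcard
      omega
    -- rhat is in the set, so rhat ≤ rstar
    have hmem : rhat ∈ {r : ℕ | r ∈ Set.Icc 1 m ∧ p r ≤ (r : ℝ) / m * α} :=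
      ⟨hr1, hple⟩
    have hbdd : BddAbove {r : ℕ | r ∈ Set.Icc 1 m ∧ p r ≤ (r : ℝ) / m * α} :=
      ⟨m, fun x hx => hx.1.2⟩
    have := le_csSup hbdd hmem
    omega
end

section
/- Consider m hypotheses of which a subset H₀ ⊆ {1,…,m} (with |H₀| = m₀) are true nulls, and let π₀ = m₀/m. If the p-values (P₁,…,P_m) are independent and each null p-value is stochastically greater than uniform on [0,1], then the BH procedure at level α has FDR ≤ π₀·α. -/
open MeasureTheory ProbabilityTheory

/-- The BH critical rank: `r* = max{r ≤ m : at least r of the p-values are ≤ (r/m)·α}`,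
which for sorted p-values equals `max{r : p_(r) ≤ (r/m)·α}`. -/
noncomputable def bhRank (m : ℕ) (α : ℝ) (p : Fin m → ℝ) : ℕ :=
  sSup {r | r ≤ m ∧ r ≤ Set.ncard {i : Fin m | p i ≤ (r : ℝ) / m * α}}

/-- The BH rejection set: indices with p-value at most the BH threshold `(r*/m)·α`. -/
noncomputable def bhReject (m : ℕ) (α : ℝ) (p : Fin m → ℝ) : Set (Fin m) :=
  {i | p i ≤ (bhRank m α p : ℝ) / m * α}

/-- False discovery proportion of a rejection set `R` for true nulls `H0`. -/
noncomputable def fdp (m : ℕ) (H0 : Set (Fin m)) (R : Set (Fin m)) : ℝ :=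
  (Set.ncard (R ∩ H0) : ℝ) / max (Set.ncard R) 1


/-- count of p-values at most the threshold for rank r -/
noncomputable def bhCount (m : ℕ) (α : ℝ) (p : Fin m → ℝ) (r : ℕ) : ℕ :=
  Set.ncard {i : Fin m | p i ≤ (r : ℝ) / m * α}

lemma bhCount_eq_sum (m : ℕ) (α : ℝ) (p : Fin m → ℝ) (r : ℕ) :
    bhCount m α p r = ∑ i : Fin m, if p i ≤ (r : ℝ) / m * α then 1 else 0 := by
  classical
  rw [bhCount, Set.ncard_eq_toFinset_card', Set.toFinset_setOf, Finset.card_filter]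

lemma bhCount_mono (m : ℕ) {α : ℝ} (hα : 0 ≤ α) (p : Fin m → ℝ) {r s : ℕ} (hrs : r ≤ s) :
    bhCount m α p r ≤ bhCount m α p s := by
  have hsub : {i : Fin m | p i ≤ (r : ℝ) / m * α} ⊆ {i : Fin m | p i ≤ (s : ℝ) / m * α} := by
    intro i hi
    simp only [Set.mem_setOf_eq] at hi ⊢
    refine le_trans hi ?_
    gcongr
  exact Set.ncard_le_ncard hsub (Set.toFinite _)

lemma bhRank_mem (m : ℕ) (α : ℝ) (p : Fin m → ℝ) :
    bhRank m α p ≤ m ∧ bhRank m α p ≤ bhCount m α p (bhRank m α p) := by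
  have h : bhRank m α p ∈ {r | r ≤ m ∧ r ≤ bhCount m α p r} := by
    apply Nat.sSup_mem ⟨0, by simp [bhCount]⟩
    exact ⟨m, fun r hr => hr.1⟩
  exact h

lemma le_bhRank (m : ℕ) (α : ℝ) (p : Fin m → ℝ) {s : ℕ} (hs : s ≤ m)
    (hc : s ≤ bhCount m α p s) : s ≤ bhRank m α p :=
  le_csSup ⟨m, fun r hr => hr.1⟩ ⟨hs, hc⟩

lemma bhCount_le (m : ℕ) (α : ℝ) (p : Fin m → ℝ) (r : ℕ) : bhCount m α p r ≤ m := by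
  simpa [bhCount] using Set.ncard_le_ncard (Set.subset_univ _) (Set.toFinite _) |>.trans
    (le_of_eq (by simp [Set.ncard_univ]))

/-- The number of rejections equals the BH rank. -/
lemma bhCount_bhRank (m : ℕ) {α : ℝ} (hα : 0 ≤ α) (p : Fin m → ℝ) :
    bhCount m α p (bhRank m α p) = bhRank m α p := by
  obtain ⟨h1, h2⟩ := bhRank_mem m α p
  refine le_antisymm ?_ h2
  by_contra hlt
  push_neg at hlt
  have hk : bhCount m α p (bhRank m α p) ≤ bhRank m α p := by
    apply le_bhRank m α p (bhCount_le m α p _)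
    exact bhCount_mono m hα p h2
  omega

lemma ncard_bhReject (m : ℕ) {α : ℝ} (hα : 0 ≤ α) (p : Fin m → ℝ) :
    Set.ncard (bhReject m α p) = bhRank m α p := bhCount_bhRank m hα p

lemma bhReject_empty (m : ℕ) (hm : 1 ≤ m) {α : ℝ} (hα : 0 < α) (p : Fin m → ℝ)
    (h0 : bhRank m α p = 0) : bhReject m α p = ∅ := by
  rw [Set.eq_empty_iff_forall_notMem]
  intro i hi
  simp only [bhReject, Set.mem_setOf_eq, h0] at hi
  have h1 : (1 : ℕ) ≤ bhRank m α p := by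
    apply le_bhRank m α p hm
    have hmem : i ∈ {j : Fin m | p j ≤ ((1 : ℕ) : ℝ) / m * α} := by
      simp only [Set.mem_setOf_eq, Nat.cast_one]
      refine le_trans (by simpa using hi) ?_
      positivity
    exact Set.ncard_pos (Set.toFinite _) |>.2 ⟨i, hmem⟩
  omega

/-- Characterization of bhRank. -/
lemma bhRank_eq_iff (m : ℕ) (α : ℝ) (p : Fin m → ℝ) (r : ℕ) :
    bhRank m α p = r ↔ (r ≤ m ∧ r ≤ bhCount m α p r) ∧
      ∀ s, s ≤ m → s ≤ bhCount m α p s → s ≤ r := by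
  constructor
  · rintro rfl
    exact ⟨⟨(bhRank_mem m α p).1, (bhRank_mem m α p).2⟩, fun s hs hc => le_bhRank m α p hs hc⟩
  · rintro ⟨⟨h1, h2⟩, h3⟩
    exact le_antisymm (h3 _ (bhRank_mem m α p).1 (bhRank_mem m α p).2) (le_bhRank m α p h1 h2)

/-- Leave-one-out: if `p i` is below the rank-`r` threshold, then replacing it by 0
does not change whether the BH rank equals `r`. -/
lemma bhRank_update (m : ℕ) {α : ℝ} (hα : 0 ≤ α) (p : Fin m → ℝ) (i : Fin m) (r : ℕ)
    (hpi : p i ≤ (r : ℝ) / m * α) :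
    (bhRank m α p = r ↔ bhRank m α (Function.update p i 0) = r) := by
  have key : ∀ s : ℕ, r ≤ s →
      bhCount m α (Function.update p i 0) s = bhCount m α p s := by
    intro s hrs
    unfold bhCount
    congr 1
    ext j
    simp only [Set.mem_setOf_eq]
    have hth : (r : ℝ) / m * α ≤ (s : ℝ) / m * α := by gcongr
    rcases eq_or_ne j i with rfl | hj
    · simp only [Function.update_self]
      constructor
      · intro _; exact le_trans hpi hth
      · intro _; positivity
    · simp [Function.update_of_ne hj]
  rw [bhRank_eq_iff, bhRank_eq_iff]
  constructor
  · rintro ⟨⟨h1, h2⟩, h3⟩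
    refine ⟨⟨h1, by rw [key r le_rfl]; exact h2⟩, fun s hs hc => ?_⟩
    by_contra hsr
    push_neg at hsr
    rw [key s hsr.le] at hc
    exact absurd (h3 s hs hc) (by omega)
  · rintro ⟨⟨h1, h2⟩, h3⟩
    refine ⟨⟨h1, by rw [← key r le_rfl]; exact h2⟩, fun s hs hc => ?_⟩
    by_contra hsr
    push_neg at hsr
    rw [← key s hsr.le] at hc
    exact absurd (h3 s hs hc) (by omega)

/-- Measurability of the bhCount function. -/
lemma measurable_bhCount (m : ℕ) (α : ℝ) (r : ℕ) :
    Measurable (fun p : Fin m → ℝ => bhCount m α p r) := by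
  classical
  simp only [bhCount_eq_sum]
  apply Finset.measurable_sum
  intro i _
  exact Measurable.ite (measurableSet_le (measurable_pi_apply i) measurable_const)
    measurable_const measurable_const

lemma measurableSet_bhRank_eq (m : ℕ) (α : ℝ) (r : ℕ) :
    MeasurableSet {p : Fin m → ℝ | bhRank m α p = r} := by
  have heq : {p : Fin m → ℝ | bhRank m α p = r} =
      {p | r ≤ m ∧ r ≤ bhCount m α p r} ∩
        ⋂ s ∈ Finset.Icc (r+1) m, {p | bhCount m α p s < s} := by
    ext p
    simp only [Set.mem_setOf_eq, Set.mem_inter_iff, Set.mem_iInter, Finset.mem_Icc,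
      bhRank_eq_iff]
    constructor
    · rintro ⟨⟨h1, h2⟩, h3⟩
      refine ⟨⟨h1, h2⟩, fun s hs => ?_⟩
      by_contra h
      push_neg at h
      have := h3 s hs.2 h
      omega
    · rintro ⟨⟨h1, h2⟩, h3⟩
      refine ⟨⟨h1, h2⟩, fun s hs hc => ?_⟩
      by_contra h
      push_neg at h
      exact absurd hc (not_le.2 (h3 s ⟨by omega, hs⟩))
  rw [heq]
  refine MeasurableSet.inter ?_
    (MeasurableSet.biInter (Finset.Icc (r+1) m).countable_toSet fun s _ => ?_)
  · exact (measurable_bhCount m α r) (show MeasurableSet {n : ℕ | r ≤ m ∧ r ≤ n} from trivial)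
  · exact (measurable_bhCount m α s) (show MeasurableSet {n : ℕ | n < s} from trivial)

lemma fdp_eq_sum (m : ℕ) (hm : 1 ≤ m) {α : ℝ} (hα : 0 < α) (p : Fin m → ℝ)
    (H0' : Finset (Fin m)) :
    fdp m (↑H0') (bhReject m α p) =
      ∑ r ∈ Finset.Icc 1 m, ∑ i ∈ H0',
        if bhRank m α p = r ∧ p i ≤ (r : ℝ) / m * α then ((r : ℝ))⁻¹ else 0 := by
  classical
  rcases Nat.eq_zero_or_pos (bhRank m α p) with h0 | hpos
  · rw [bhReject_empty m hm hα p h0]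
    have : ∀ r ∈ Finset.Icc 1 m, (∑ i ∈ H0',
        if bhRank m α p = r ∧ p i ≤ (r : ℝ) / m * α then ((r : ℝ))⁻¹ else 0) = 0 := by
      intro r hr
      apply Finset.sum_eq_zero
      intro i _
      rw [if_neg]
      rintro ⟨hrank, -⟩
      rw [Finset.mem_Icc] at hr
      omega
    rw [Finset.sum_eq_zero this]
    simp [fdp]
  · set r₀ := bhRank m α p with hr₀
    have hr₀m : r₀ ≤ m := (bhRank_mem m α p).1
    have hmem : r₀ ∈ Finset.Icc 1 m := Finset.mem_Icc.2 ⟨hpos, hr₀m⟩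
    rw [Finset.sum_eq_single_of_mem r₀ hmem (fun r _ hr => Finset.sum_eq_zero fun i _ => by
      rw [if_neg]; rintro ⟨hrank, -⟩; exact hr (hrank ▸ rfl))]
    have hinner : (∑ i ∈ H0', if bhRank m α p = r₀ ∧ p i ≤ (r₀ : ℝ) / m * α
        then ((r₀ : ℝ))⁻¹ else 0) =
        ((H0'.filter (fun i => p i ≤ (r₀ : ℝ) / m * α)).card : ℝ) * ((r₀ : ℝ))⁻¹ := by
      rw [← Finset.sum_filter]
      simp only [hr₀, true_and]
      rw [Finset.sum_const, nsmul_eq_mul]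
    rw [hinner]
    have hcap : bhReject m α p ∩ (↑H0' : Set (Fin m)) =
        ↑(H0'.filter (fun i => p i ≤ (r₀ : ℝ) / m * α)) := by
      ext i
      simp only [bhReject, Set.mem_inter_iff, Set.mem_setOf_eq, Finset.coe_filter,
        Finset.mem_coe, Finset.mem_filter]
      tauto
    have hmax : max (Set.ncard (bhReject m α p)) 1 = r₀ := by
      rw [ncard_bhReject m hα.le p, ← hr₀]
      omega
    rw [fdp, hcap, hmax, Set.ncard_coe_finset, div_eq_mul_inv]

section Prob
variable {Ω : Type*} [MeasureSpace Ω] [IsProbabilityMeasure (ℙ : Measure Ω)]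

/-- Measurability of the leave-one-out map. -/
lemma measurable_update_map (m : ℕ) (P : Fin m → Ω → ℝ) (hmeas : ∀ i, Measurable (P i))
    (i : Fin m) :
    Measurable (fun ω => Function.update (fun j => P j ω) i (0 : ℝ)) := by
  apply measurable_pi_lambda
  intro j
  rcases eq_or_ne j i with rfl | hj
  · simp only [Function.update_self]; exact measurable_const
  · simp only [Function.update_of_ne hj]; exact hmeas j

/-- Independence step: the event on `P i` is independent of any event on the
leave-one-out vector. -/
lemma indep_step (m : ℕ) (α : ℝ) (P : Fin m → Ω → ℝ) (hmeas : ∀ i, Measurable (P i))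
    (hindep : iIndepFun P ℙ) (i : Fin m) (c : ℝ) (r : ℕ) :
    ℙ ({ω | P i ω ≤ c} ∩ {ω | bhRank m α (Function.update (fun j => P j ω) i 0) = r}) =
      ℙ {ω | P i ω ≤ c} * ℙ {ω | bhRank m α (Function.update (fun j => P j ω) i 0) = r} := by
  classical
  set T : Finset (Fin m) := Finset.univ.erase i with hT
  have hdisj : Disjoint ({i} : Finset (Fin m)) T := by
    simp [hT, Finset.disjoint_left]
  have hind := hindep.indepFun_finset {i} T hdisj hmeas
  set X : Ω → (({i} : Finset (Fin m)) → ℝ) := fun a j => P j a with hX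
  set Y : Ω → ({x // x ∈ T} → ℝ) := fun a j => P j a with hY
  set F : ({x // x ∈ T} → ℝ) → (Fin m → ℝ) :=
    fun q j => if h : j ∈ T then q ⟨j, h⟩ else 0 with hF
  have hFmeas : Measurable F := by
    apply measurable_pi_lambda
    intro j
    by_cases h : j ∈ T
    · simp only [hF, dif_pos h]; exact measurable_pi_apply _
    · simp only [hF, dif_neg h]; exact measurable_const
  have hFY : ∀ ω, F (Y ω) = Function.update (fun j => P j ω) i 0 := by
    intro ω
    funext j
    rcases eq_or_ne j i with rfl | hj
    · have : j ∉ T := by simp [hT]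
      simp [hF, dif_neg this, Function.update_self]
    · have hjT : j ∈ T := by simp [hT, hj]
      simp [hF, dif_pos hjT, hY, Function.update_of_ne hj]
  have hiS : i ∈ ({i} : Finset (Fin m)) := Finset.mem_singleton_self i
  set sA : Set (({i} : Finset (Fin m)) → ℝ) := {q | q ⟨i, hiS⟩ ≤ c} with hsA
  have hsAm : MeasurableSet sA :=
    measurable_pi_apply (⟨i, hiS⟩ : ({i} : Finset (Fin m))) measurableSet_Iic
  set sB : Set ({x // x ∈ T} → ℝ) := F ⁻¹' {p | bhRank m α p = r} with hsB
  have hsBm : MeasurableSet sB := hFmeas (measurableSet_bhRank_eq m α r)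
  have hA : {ω | P i ω ≤ c} = X ⁻¹' sA := rfl
  have hB : {ω | bhRank m α (Function.update (fun j => P j ω) i 0) = r} = Y ⁻¹' sB := by
    ext ω
    simp only [Set.mem_setOf_eq, Set.mem_preimage, hsB, Set.mem_setOf_eq, hFY ω]
  rw [hA, hB]
  exact hind.measure_inter_preimage_eq_mul sA sB hsAm hsBm

end Prob

/-- BH FDR control: with independent p-values whose null members are super-uniform,
the BH procedure at level `α` has `FDR ≤ π₀·α` where `π₀ = |H0|/m`. -/
theorem stmt_9 (m : ℕ) (hm : 1 ≤ m) (α : ℝ) (hα : α ∈ Set.Ioo (0 : ℝ) 1)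
    {Ω : Type*} [MeasureSpace Ω] [IsProbabilityMeasure (ℙ : Measure Ω)]
    (P : Fin m → Ω → ℝ) (hmeas : ∀ i, Measurable (P i))
    (hindep : iIndepFun P ℙ)
    (H0 : Set (Fin m))
    (hnull : ∀ i ∈ H0, ∀ t ∈ Set.Icc (0 : ℝ) 1, ℙ {ω | P i ω ≤ t} ≤ ENNReal.ofReal t) :
    ∫ ω, fdp m H0 (bhReject m α fun i => P i ω) ≤ (Set.ncard H0 : ℝ) / m * α := by
  classical
  obtain ⟨hα0, hα1⟩ := hα
  have hm0 : (0 : ℝ) < m := by exact_mod_cast hm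
  set H0' : Finset (Fin m) := (Set.toFinite H0).toFinset with hH0'
  have hH0coe : (↑H0' : Set (Fin m)) = H0 := (Set.toFinite H0).coe_toFinset
  -- events
  set E : Fin m → ℕ → Set Ω := fun i r =>
    {ω | bhRank m α (fun j => P j ω) = r} ∩ {ω | P i ω ≤ (r : ℝ) / m * α} with hE
  have hPi : Measurable (fun ω => (fun j => P j ω)) := measurable_pi_lambda _ hmeas
  have hEmeas : ∀ i r, MeasurableSet (E i r) := fun i r =>
    (hPi (measurableSet_bhRank_eq m α r)).inter (hmeas i measurableSet_Iic)
  -- leave-one-out events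
  set B : Fin m → ℕ → Set Ω := fun i r =>
    {ω | bhRank m α (Function.update (fun j => P j ω) i 0) = r} with hB
  have hBmeas : ∀ i r, MeasurableSet (B i r) := fun i r =>
    (measurable_update_map m P hmeas i) (measurableSet_bhRank_eq m α r)
  -- pointwise identity
  have hptwise : ∀ ω, fdp m H0 (bhReject m α fun i => P i ω) =
      ∑ r ∈ Finset.Icc 1 m, ∑ i ∈ H0',
        Set.indicator (E i r) (fun _ => ((r : ℝ))⁻¹) ω := by
    intro ω
    rw [← hH0coe, fdp_eq_sum m hm hα0 _ H0']
    refine Finset.sum_congr rfl fun r _ => Finset.sum_congr rfl fun i _ => ?_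
    rw [Set.indicator_apply]
    simp only [hE, Set.mem_inter_iff, Set.mem_setOf_eq]
  simp_rw [hptwise]
  -- integrability
  have hInt : ∀ i r, Integrable ((E i r).indicator (fun _ => ((r : ℝ))⁻¹)) ℙ :=
    fun i r => (integrable_const _).indicator (hEmeas i r)
  rw [integral_finset_sum _ (fun r _ => integrable_finset_sum _ fun i _ => hInt i r)]
  have hswap : ∀ r ∈ Finset.Icc 1 m,
      ∫ ω, ∑ i ∈ H0', (E i r).indicator (fun _ => ((r : ℝ))⁻¹) ω =
        ∑ i ∈ H0', ((ℙ (E i r)).toReal * ((r : ℝ))⁻¹) := by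
    intro r _
    rw [integral_finset_sum _ fun i _ => hInt i r]
    refine Finset.sum_congr rfl fun i _ => ?_
    rw [integral_indicator_const _ (hEmeas i r)]
    simp [mul_comm, measureReal_def]
  rw [Finset.sum_congr rfl hswap, Finset.sum_comm]
  -- per-null bound
  have hkey : ∀ i ∈ H0', ∑ r ∈ Finset.Icc 1 m, (ℙ (E i r)).toReal * ((r : ℝ))⁻¹ ≤ α / m := by
    intro i hi
    have hiH0 : i ∈ H0 := by rw [← hH0coe]; exact_mod_cast hi
    have hterm : ∀ r ∈ Finset.Icc 1 m,
        (ℙ (E i r)).toReal * ((r : ℝ))⁻¹ ≤ α / m * (ℙ (B i r)).toReal := by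
      intro r hr
      rw [Finset.mem_Icc] at hr
      have hr0 : (0 : ℝ) < r := by exact_mod_cast hr.1
      have hth0 : (0 : ℝ) ≤ (r : ℝ) / m * α := by positivity
      have hth1 : (r : ℝ) / m * α ≤ 1 := by
        have h1 : (r : ℝ) / m ≤ 1 := (div_le_one hm0).2 (by exact_mod_cast hr.2)
        nlinarith
      -- event rewrite via leave-one-out
      have hEeq : E i r = {ω | P i ω ≤ (r : ℝ) / m * α} ∩ B i r := by
        ext ω
        simp only [hE, hB, Set.mem_inter_iff, Set.mem_setOf_eq]
        constructor
        · rintro ⟨hrank, hle⟩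
          exact ⟨hle, (bhRank_update m hα0.le _ i r hle).1 hrank⟩
        · rintro ⟨hle, hrank⟩
          exact ⟨(bhRank_update m hα0.le _ i r hle).2 hrank, hle⟩
      have hmul : ℙ (E i r) = ℙ {ω | P i ω ≤ (r : ℝ) / m * α} * ℙ (B i r) := by
        rw [hEeq]
        exact indep_step m α P hmeas hindep i _ r
      have hAle : (ℙ {ω | P i ω ≤ (r : ℝ) / m * α}).toReal ≤ (r : ℝ) / m * α :=
        ENNReal.toReal_le_of_le_ofReal hth0 (hnull i hiH0 _ ⟨hth0, hth1⟩)
      calc (ℙ (E i r)).toReal * ((r : ℝ))⁻¹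
          = (ℙ {ω | P i ω ≤ (r : ℝ) / m * α}).toReal * (ℙ (B i r)).toReal * ((r : ℝ))⁻¹ := by
            rw [hmul, ENNReal.toReal_mul]
        _ ≤ ((r : ℝ) / m * α) * (ℙ (B i r)).toReal * ((r : ℝ))⁻¹ := by
            have := (ℙ (B i r)).toReal_nonneg
            gcongr
        _ = α / m * (ℙ (B i r)).toReal := by
            field_simp
    calc ∑ r ∈ Finset.Icc 1 m, (ℙ (E i r)).toReal * ((r : ℝ))⁻¹
        ≤ ∑ r ∈ Finset.Icc 1 m, α / m * (ℙ (B i r)).toReal :=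
          Finset.sum_le_sum hterm
      _ = α / m * ∑ r ∈ Finset.Icc 1 m, (ℙ (B i r)).toReal := by rw [Finset.mul_sum]
      _ ≤ α / m * 1 := by
          have hsum : ∑ r ∈ Finset.Icc 1 m, ℙ (B i r) ≤ 1 := by
            have hdisj : (Finset.Icc 1 m : Set ℕ).Pairwise
                (Function.onFun Disjoint (B i)) := by
              intro r _ s _ hrs
              rw [Function.onFun, Set.disjoint_left]
              intro ω hωr hωs
              simp only [hB, Set.mem_setOf_eq] at hωr hωs
              exact hrs (hωr ▸ hωs ▸ rfl)
            rw [← measure_biUnion_finset hdisj fun r _ => hBmeas i r]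
            exact prob_le_one
          have h1 : (∑ r ∈ Finset.Icc 1 m, ℙ (B i r)).toReal ≤ 1 := by
            have := ENNReal.toReal_mono (by simp) hsum
            simpa using this
          rw [ENNReal.toReal_sum (fun r _ => measure_ne_top _ _)] at h1
          have : (0:ℝ) ≤ α / m := by positivity
          nlinarith [h1]
      _ = α / m := mul_one _
  calc ∑ i ∈ H0', ∑ r ∈ Finset.Icc 1 m, (ℙ (E i r)).toReal * ((r : ℝ))⁻¹
      ≤ ∑ _i ∈ H0', α / m := Finset.sum_le_sum hkey
    _ = H0'.card * (α / m) := by rw [Finset.sum_const, nsmul_eq_mul]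
    _ = (Set.ncard H0 : ℝ) / m * α := by
        rw [hH0', ← Set.ncard_eq_toFinset_card H0 (Set.toFinite H0)]
        ring
end

section
/- Let F_n denote the CDF of P^{fMC} = (1 + Binomial(n, p))/(n+1) where p ~ F for a fixed continuous CDF F on [0,1]. Then F_n converges uniformly on [0,1] to F as n → ∞. -/
open MeasureTheory Finset
open scoped ENNReal unitInterval

noncomputable def mcB (n : ℕ) (p : ℝ) (k : Fin (n+1)) : ℝ :=
  (n.choose k : ℝ) * p ^ (k:ℕ) * (1 - p) ^ (n - (k:ℕ))

noncomputable def mcG (n : ℕ) (t p : ℝ) : ℝ :=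
  ∑ k : Fin (n+1), if (1 + ((k:ℕ):ℝ))/((n:ℝ)+1) ≤ t then mcB n p k else 0

lemma mcPMF_eq {n : ℕ} {p : ℝ} (hp0 : 0 ≤ p) (hp1 : p ≤ 1) (k : Fin (n+1)) :
    (PMF.binomial (min (Real.toNNReal p) 1) (min_le_right _ _) n) k
      = ENNReal.ofReal (mcB n p k) := by
  have hle : Real.toNNReal p ≤ 1 := by simpa using hp1
  have hmin : min (Real.toNNReal p) 1 = Real.toNNReal p := min_eq_left hle
  rw [PMF.binomial_apply, hmin, Fin.val_last]
  have e : ((Real.toNNReal p : NNReal) : ℝ≥0∞) = ENNReal.ofReal p := rfl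
  rw [e]
  have h1p : (1 : ℝ≥0∞) - ENNReal.ofReal p = ENNReal.ofReal (1 - p) := by
    rw [ENNReal.ofReal_sub 1 hp0, ENNReal.ofReal_one]
  rw [h1p, ← ENNReal.ofReal_pow hp0, ← ENNReal.ofReal_pow (by linarith),
    ← ENNReal.ofReal_natCast (n.choose k), ← ENNReal.ofReal_mul (pow_nonneg hp0 _),
    ← ENNReal.ofReal_mul (mul_nonneg (pow_nonneg hp0 _) (pow_nonneg (by linarith) _))]
  unfold mcB
  ring_nf

noncomputable def mcKer (n : ℕ) (p : ℝ) : Measure ℝ :=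
  ((PMF.binomial (min (Real.toNNReal p) 1) (min_le_right _ _) n).toMeasure.map
    fun k : Fin (n + 1) => (1 + ((k : ℕ) : ℝ)) / ((n : ℝ) + 1))

lemma mcF_meas (n : ℕ) : Measurable (fun k : Fin (n+1) => (1 + ((k : ℕ) : ℝ)) / ((n : ℝ) + 1)) :=
  measurable_of_countable _

lemma mcKer_Iic {n : ℕ} {p : ℝ} (hp0 : 0 ≤ p) (hp1 : p ≤ 1) (t : ℝ) :
    mcKer n p (Set.Iic t) = ENNReal.ofReal (mcG n t p) := by
  classical
  rw [mcKer, Measure.map_apply (mcF_meas n) measurableSet_Iic,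
    PMF.toMeasure_apply_fintype]
  rw [mcG, ENNReal.ofReal_sum_of_nonneg]
  · refine Finset.sum_congr rfl fun k _ => ?_
    rw [Set.indicator_apply, apply_ite ENNReal.ofReal, ENNReal.ofReal_zero]
    refine if_congr Iff.rfl (mcPMF_eq hp0 hp1 k) rfl
  · intro k _
    split_ifs
    · exact mul_nonneg (mul_nonneg (by positivity) (pow_nonneg hp0 _)) (pow_nonneg (by linarith) _)
    · exact le_rfl

lemma mcKer_meas (n : ℕ) : Measurable (fun p : ℝ => mcKer n p) := by
  classical
  apply Measure.measurable_of_measurable_coe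
  intro s hs
  unfold mcKer
  simp_rw [Measure.map_apply (mcF_meas n) hs, PMF.toMeasure_apply_fintype,
    Set.indicator_apply, PMF.binomial_apply]
  apply Finset.measurable_sum
  intro k _
  by_cases hk : k ∈ (fun k : Fin (n+1) => (1 + ((k : ℕ) : ℝ)) / ((n : ℝ) + 1)) ⁻¹' s
  · simp only [hk, if_true]
    apply Measurable.coe_nnreal_ennreal
    fun_prop
  · simp only [hk, if_false]
    exact measurable_const

lemma mcKer_le_one (n : ℕ) (p : ℝ) (s : Set ℝ) : mcKer n p s ≤ 1 := by
  rw [mcKer]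
  refine le_trans (measure_mono (Set.subset_univ s)) ?_
  rw [Measure.map_apply (mcF_meas n) MeasurableSet.univ]
  simp

lemma mcB_eq_bernstein {n : ℕ} {p : ℝ} (hp : p ∈ I) (k : Fin (n+1)) :
    mcB n p k = bernstein n k ⟨p, hp⟩ := by
  simp [mcB, bernstein_apply]

lemma mcB_nonneg {n : ℕ} {p : ℝ} (hp0 : 0 ≤ p) (hp1 : p ≤ 1) (k : Fin (n+1)) :
    0 ≤ mcB n p k := by
  have h1 : (0:ℝ) ≤ 1 - p := by linarith
  unfold mcB; positivity

lemma mcB_sum {n : ℕ} {p : ℝ} (hp : p ∈ I) : ∑ k : Fin (n+1), mcB n p k = 1 := by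
  simp_rw [mcB_eq_bernstein hp]
  exact bernstein.probability n ⟨p, hp⟩

lemma mcCheb {n : ℕ} (hn : 0 < n) {p : ℝ} (hp : p ∈ I) {c : ℝ} (hc : 0 < c)
    (P : Fin (n+1) → Prop) [DecidablePred P]
    (hP : ∀ k, P k → c ≤ |p - ((k:ℕ):ℝ)/(n:ℝ)|) :
    ∑ k : Fin (n+1), (if P k then mcB n p k else 0) ≤ 1/(4 * n * c^2) := by
  have hn' : (0:ℝ) < n := by exact_mod_cast hn
  set x : I := ⟨p, hp⟩ with hx
  have key : ∀ k : Fin (n+1), (if P k then mcB n p k else 0)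
      ≤ c⁻¹^2 * ((p - ((k:ℕ):ℝ)/(n:ℝ))^2 * bernstein n k x) := by
    intro k
    by_cases hk : P k
    · simp only [hk, if_true, mcB_eq_bernstein hp]
      have h1 : c^2 ≤ (p - ((k:ℕ):ℝ)/(n:ℝ))^2 := by
        have := hP k hk
        have h2 : c^2 ≤ |p - ((k:ℕ):ℝ)/(n:ℝ)|^2 := by nlinarith [abs_nonneg (p - ((k:ℕ):ℝ)/(n:ℝ))]
        rwa [sq_abs] at h2
      have hb : (0:ℝ) ≤ bernstein n k x := bernstein_nonneg
      have h1' : (1:ℝ) ≤ c⁻¹^2 * (p - ((k:ℕ):ℝ)/(n:ℝ))^2 := by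
        calc (1:ℝ) = c⁻¹^2 * c^2 := by field_simp
        _ ≤ c⁻¹^2 * (p - ((k:ℕ):ℝ)/(n:ℝ))^2 :=
            mul_le_mul_of_nonneg_left h1 (by positivity)
      calc bernstein n k x = 1 * bernstein n k x := (one_mul _).symm
        _ ≤ (c⁻¹^2 * (p - ((k:ℕ):ℝ)/(n:ℝ))^2) * bernstein n k x :=
            mul_le_mul_of_nonneg_right h1' hb
        _ = c⁻¹^2 * ((p - ((k:ℕ):ℝ)/(n:ℝ))^2 * bernstein n k x) := by ring
    · simp only [hk, if_false]
      positivity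
  calc ∑ k : Fin (n+1), (if P k then mcB n p k else 0)
      ≤ ∑ k : Fin (n+1), c⁻¹^2 * ((p - ((k:ℕ):ℝ)/(n:ℝ))^2 * bernstein n k x) :=
        Finset.sum_le_sum fun k _ => key k
    _ = c⁻¹^2 * ∑ k : Fin (n+1), ((x:ℝ) - (bernstein.z k : ℝ))^2 * bernstein n k x := by
        rw [Finset.mul_sum]
        refine Finset.sum_congr rfl fun k _ => ?_
        congr 2
    _ = c⁻¹^2 * ((x:ℝ) * (1 - (x:ℝ)) / n) := by rw [bernstein.variance hn.ne']
    _ ≤ 1/(4 * n * c^2) := by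
        have hx1 : (x:ℝ) * (1 - (x:ℝ)) ≤ 1/4 := by
          have h0 : (0:ℝ) ≤ p := hp.1
          have h1 : p ≤ 1 := hp.2
          show p * (1 - p) ≤ 1/4
          nlinarith [sq_nonneg (p - 1/2)]
        have hx0 : (0:ℝ) ≤ (x:ℝ) * (1 - (x:ℝ)) := by
          have h0 : (0:ℝ) ≤ p := hp.1
          have h1 : p ≤ 1 := hp.2
          show (0:ℝ) ≤ p * (1 - p)
          nlinarith
        rw [div_eq_mul_inv ((x:ℝ) * (1 - (x:ℝ)))]
        calc c⁻¹^2 * ((x:ℝ) * (1 - (x:ℝ)) * (n:ℝ)⁻¹) ≤ c⁻¹^2 * (1/4 * (n:ℝ)⁻¹) := by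
              apply mul_le_mul_of_nonneg_left _ (by positivity)
              apply mul_le_mul_of_nonneg_right hx1 (by positivity)
          _ = 1/(4 * n * c^2) := by field_simp

lemma mcG_nonneg {n : ℕ} {p : ℝ} (hp : p ∈ I) (t : ℝ) : 0 ≤ mcG n t p := by
  apply Finset.sum_nonneg
  intro k _
  split_ifs
  · exact mcB_nonneg hp.1 hp.2 k
  · exact le_rfl

lemma mcG_le_one {n : ℕ} {p : ℝ} (hp : p ∈ I) (t : ℝ) : mcG n t p ≤ 1 := by
  rw [← mcB_sum hp]
  apply Finset.sum_le_sum
  intro k _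
  split_ifs
  · exact le_rfl
  · exact mcB_nonneg hp.1 hp.2 k

lemma mcUpper {n : ℕ} (hn : 0 < n) {p t ε : ℝ} (hp : p ∈ I) (hε : 0 < ε)
    (hpt : t + ε ≤ p) : mcG n t p ≤ 1/(n * ε^2) := by
  have hn' : (0:ℝ) < n := by exact_mod_cast hn
  have h := mcCheb hn hp hε (fun k : Fin (n+1) => (1 + ((k:ℕ):ℝ))/((n:ℝ)+1) ≤ t) ?_
  · refine le_trans h ?_
    rw [div_le_div_iff₀ (by positivity) (by positivity)]
    nlinarith [sq_nonneg ε]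
  · intro k hk
    have hk' : (1 + ((k:ℕ):ℝ)) ≤ t * ((n:ℝ)+1) := by
      rw [div_le_iff₀ (by positivity)] at hk
      linarith
    have hkn : ((k:ℕ):ℝ)/(n:ℝ) ≤ p - ε := by
      rw [div_le_iff₀ hn']
      have hp1 : p ≤ 1 := hp.2
      nlinarith
    have : ε ≤ p - ((k:ℕ):ℝ)/(n:ℝ) := by linarith
    exact le_trans this (le_abs_self _)

lemma mcLower {n : ℕ} (hn : 0 < n) {p t ε : ℝ} (hp : p ∈ I) (hε : 0 < ε)
    (hn2 : 2/ε ≤ (n:ℝ)) (hpt : p ≤ t - ε) : 1 - 1/(n * ε^2) ≤ mcG n t p := by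
  have hn' : (0:ℝ) < n := by exact_mod_cast hn
  have hsum : mcG n t p
      + ∑ k : Fin (n+1), (if ¬((1 + ((k:ℕ):ℝ))/((n:ℝ)+1) ≤ t) then mcB n p k else 0) = 1 := by
    rw [mcG, ← Finset.sum_add_distrib]
    have he : ∀ k : Fin (n+1),
        (if (1 + ((k:ℕ):ℝ))/((n:ℝ)+1) ≤ t then mcB n p k else 0)
        + (if ¬((1 + ((k:ℕ):ℝ))/((n:ℝ)+1) ≤ t) then mcB n p k else 0) = mcB n p k := by
      intro k
      by_cases hk : (1 + ((k:ℕ):ℝ))/((n:ℝ)+1) ≤ t <;> simp [hk]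
    rw [Finset.sum_congr rfl fun k _ => he k]
    exact mcB_sum hp
  have h := mcCheb hn hp (half_pos hε) (fun k : Fin (n+1) => ¬((1 + ((k:ℕ):ℝ))/((n:ℝ)+1) ≤ t)) ?_
  · have heq : 1/(4 * n * (ε/2)^2) = 1/(n * ε^2) := by field_simp; ring
    rw [heq] at h
    linarith
  · intro k hk
    rw [not_le] at hk
    have hk' : t * ((n:ℝ)+1) < 1 + ((k:ℕ):ℝ) := by
      rw [lt_div_iff₀ (by positivity)] at hk
      linarith
    have h1n : 1/(n:ℝ) ≤ ε/2 := by
      rw [div_le_iff₀ hn']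
      rw [div_le_iff₀ hε] at hn2
      linarith
    have hkn : p + ε/2 ≤ ((k:ℕ):ℝ)/(n:ℝ) := by
      rw [le_div_iff₀ hn']
      have hp0 : 0 ≤ p := hp.1
      have : (p + ε) * ((n:ℝ)+1) ≤ t * ((n:ℝ)+1) := by
        apply mul_le_mul_of_nonneg_right (by linarith) (by positivity)
      have hεn : (1:ℝ) ≤ ε/2 * (n:ℝ) := by
        rw [div_le_iff₀ hε] at hn2
        nlinarith
      nlinarith
    have : ε/2 ≤ ((k:ℕ):ℝ)/(n:ℝ) - p := by linarith
    calc ε/2 ≤ |((k:ℕ):ℝ)/(n:ℝ) - p| := le_trans this (le_abs_self _)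
      _ = |p - ((k:ℕ):ℝ)/(n:ℝ)| := abs_sub_comm _ _

lemma mcAE (μ : Measure ℝ) [IsProbabilityMeasure μ] (hsupp : μ (Set.Icc 0 1) = 1) :
    ∀ᵐ p ∂μ, p ∈ Set.Icc (0:ℝ) 1 := by
  have h0 : μ (Set.Icc (0:ℝ) 1)ᶜ = 0 := by
    rw [measure_compl measurableSet_Icc (measure_ne_top μ _), hsupp, measure_univ, tsub_self]
  rw [MeasureTheory.ae_iff]
  convert h0 using 2
  rfl

lemma mcBind_le_one (μ : Measure ℝ) [IsProbabilityMeasure μ] (n : ℕ) (t : ℝ) :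
    μ.bind (mcKer n) (Set.Iic t) ≤ 1 := by
  rw [Measure.bind_apply measurableSet_Iic (mcKer_meas n).aemeasurable]
  calc ∫⁻ p, mcKer n p (Set.Iic t) ∂μ ≤ ∫⁻ _, 1 ∂μ :=
        lintegral_mono fun p => mcKer_le_one n p _
    _ = 1 := by rw [lintegral_one, measure_univ]

lemma mcBind_upper (μ : Measure ℝ) [IsProbabilityMeasure μ] (hsupp : μ (Set.Icc 0 1) = 1)
    {n : ℕ} (hn : 0 < n) {t ε : ℝ} (hε : 0 < ε) :
    μ.bind (mcKer n) (Set.Iic t)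
      ≤ μ (Set.Iic (t+ε)) + ENNReal.ofReal (1/(n*ε^2)) := by
  rw [Measure.bind_apply measurableSet_Iic (mcKer_meas n).aemeasurable]
  calc ∫⁻ p, mcKer n p (Set.Iic t) ∂μ
      ≤ ∫⁻ p, (Set.indicator (Set.Iic (t+ε)) (fun _ => 1) p
          + ENNReal.ofReal (1/(n*ε^2))) ∂μ := by
        refine lintegral_mono_ae ((mcAE μ hsupp).mono fun p hp => ?_)
        by_cases hple : p ≤ t + ε
        · rw [Set.indicator_of_mem (Set.mem_Iic.mpr hple)]
          exact le_trans (mcKer_le_one n p _) le_self_add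
        · rw [Set.indicator_of_notMem (by simpa using hple), zero_add,
            mcKer_Iic hp.1 hp.2]
          exact ENNReal.ofReal_le_ofReal (mcUpper hn hp hε (le_of_not_ge hple))
    _ = μ (Set.Iic (t+ε)) + ENNReal.ofReal (1/(n*ε^2)) := by
        rw [lintegral_add_right _ measurable_const, lintegral_indicator measurableSet_Iic,
          setLIntegral_one, lintegral_const, measure_univ, mul_one]

lemma mcBind_lower (μ : Measure ℝ) [IsProbabilityMeasure μ] (hsupp : μ (Set.Icc 0 1) = 1)
    {n : ℕ} (hn : 0 < n) {t ε : ℝ} (hε : 0 < ε) (hn2 : 2/ε ≤ (n:ℝ)) :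
    μ (Set.Iic (t-ε)) ≤ μ.bind (mcKer n) (Set.Iic t) + ENNReal.ofReal (1/(n*ε^2)) := by
  set d : ℝ≥0∞ := ENNReal.ofReal (1/(n*ε^2)) with hd
  have step1 : ∫⁻ p, Set.indicator (Set.Iic (t-ε)) (fun _ => 1 - d) p ∂μ
      ≤ ∫⁻ p, mcKer n p (Set.Iic t) ∂μ := by
    refine lintegral_mono_ae ((mcAE μ hsupp).mono fun p hp => ?_)
    by_cases hple : p ≤ t - ε
    · rw [Set.indicator_of_mem (Set.mem_Iic.mpr hple), mcKer_Iic hp.1 hp.2]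
      rw [tsub_le_iff_right, hd, ← ENNReal.ofReal_add (mcG_nonneg hp t) (by positivity)]
      calc (1:ℝ≥0∞) = ENNReal.ofReal 1 := ENNReal.ofReal_one.symm
        _ ≤ ENNReal.ofReal (mcG n t p + 1/(n*ε^2)) := by
            apply ENNReal.ofReal_le_ofReal
            have := mcLower hn hp hε hn2 hple
            linarith
    · rw [Set.indicator_of_notMem (by simpa using hple)]
      exact zero_le
  have step2 : ∫⁻ p, Set.indicator (Set.Iic (t-ε)) (fun _ => 1 - d) p ∂μ
      = (1 - d) * μ (Set.Iic (t-ε)) := by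
    rw [lintegral_indicator measurableSet_Iic, setLIntegral_const]
  have step3 : μ (Set.Iic (t-ε)) ≤ (1 - d) * μ (Set.Iic (t-ε)) + d := by
    by_cases hd1 : 1 ≤ d
    · calc μ (Set.Iic (t-ε)) ≤ 1 := prob_le_one
        _ ≤ d := hd1
        _ ≤ (1 - d) * μ (Set.Iic (t-ε)) + d := le_add_self
    · have hdle : d ≤ 1 := le_of_not_ge hd1
      calc μ (Set.Iic (t-ε)) = 1 * μ (Set.Iic (t-ε)) := (one_mul _).symm
        _ = ((1 - d) + d) * μ (Set.Iic (t-ε)) := by rw [tsub_add_cancel_of_le hdle]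
        _ = (1 - d) * μ (Set.Iic (t-ε)) + d * μ (Set.Iic (t-ε)) := by rw [add_mul]
        _ ≤ (1 - d) * μ (Set.Iic (t-ε)) + d := by
            apply add_le_add_right
            calc d * μ (Set.Iic (t-ε)) ≤ d * 1 := mul_le_mul_right prob_le_one d
              _ = d := mul_one d
  rw [Measure.bind_apply measurableSet_Iic (mcKer_meas n).aemeasurable]
  calc μ (Set.Iic (t-ε)) ≤ (1 - d) * μ (Set.Iic (t-ε)) + d := step3
    _ ≤ ∫⁻ p, mcKer n p (Set.Iic t) ∂μ + d := add_le_add_left (step2 ▸ step1) d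

lemma mcReal_upper (μ : Measure ℝ) [IsProbabilityMeasure μ] (hsupp : μ (Set.Icc 0 1) = 1)
    {n : ℕ} (hn : 0 < n) {t ε : ℝ} (hε : 0 < ε) :
    (μ.bind (mcKer n) (Set.Iic t)).toReal
      ≤ (μ (Set.Iic (t+ε))).toReal + 1/(n*ε^2) := by
  have h := mcBind_upper μ hsupp hn hε (t := t)
  have hfin : μ (Set.Iic (t+ε)) + ENNReal.ofReal (1/(n*ε^2)) ≠ ⊤ :=
    ENNReal.add_ne_top.mpr ⟨measure_ne_top μ _, ENNReal.ofReal_ne_top⟩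
  calc (μ.bind (mcKer n) (Set.Iic t)).toReal
      ≤ (μ (Set.Iic (t+ε)) + ENNReal.ofReal (1/(n*ε^2))).toReal := ENNReal.toReal_mono hfin h
    _ = (μ (Set.Iic (t+ε))).toReal + 1/(n*ε^2) := by
        rw [ENNReal.toReal_add (measure_ne_top μ _) ENNReal.ofReal_ne_top,
          ENNReal.toReal_ofReal (by positivity)]

lemma mcReal_lower (μ : Measure ℝ) [IsProbabilityMeasure μ] (hsupp : μ (Set.Icc 0 1) = 1)
    {n : ℕ} (hn : 0 < n) {t ε : ℝ} (hε : 0 < ε) (hn2 : 2/ε ≤ (n:ℝ)) :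
    (μ (Set.Iic (t-ε))).toReal
      ≤ (μ.bind (mcKer n) (Set.Iic t)).toReal + 1/(n*ε^2) := by
  have h := mcBind_lower μ hsupp hn hε hn2 (t := t)
  have hb : μ.bind (mcKer n) (Set.Iic t) ≠ ⊤ :=
    ne_top_of_le_ne_top ENNReal.one_ne_top (mcBind_le_one μ n t)
  have hfin : μ.bind (mcKer n) (Set.Iic t) + ENNReal.ofReal (1/(n*ε^2)) ≠ ⊤ :=
    ENNReal.add_ne_top.mpr ⟨hb, ENNReal.ofReal_ne_top⟩
  calc (μ (Set.Iic (t-ε))).toReal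
      ≤ (μ.bind (mcKer n) (Set.Iic t) + ENNReal.ofReal (1/(n*ε^2))).toReal :=
        ENNReal.toReal_mono hfin h
    _ = (μ.bind (mcKer n) (Set.Iic t)).toReal + 1/(n*ε^2) := by
        rw [ENNReal.toReal_add hb ENNReal.ofReal_ne_top,
          ENNReal.toReal_ofReal (by positivity)]

/-- The CDF of the Monte Carlo p-value `P^{fMC} = (1 + Binomial(n, p))/(n+1)`,
where `p ~ F` for a continuous CDF `F` (of a probability measure `μ` on `[0,1]`),
converges uniformly on `[0,1]` to `F` as `n → ∞`. -/
theorem stmt_13 (μ : Measure ℝ) [IsProbabilityMeasure μ]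
    (hsupp : μ (Set.Icc 0 1) = 1)
    (F : ℝ → ℝ) (hF : ∀ t, F t = (μ (Set.Iic t)).toReal) (hFcont : Continuous F) :
    TendstoUniformlyOn
      (fun (n : ℕ) (t : ℝ) =>
        ((μ.bind fun p =>
            ((PMF.binomial (min (Real.toNNReal p) 1) (min_le_right _ _) n).toMeasure.map
              fun k : Fin (n + 1) => (1 + ((k : ℕ) : ℝ)) / ((n : ℝ) + 1)))
          (Set.Iic t)).toReal)
      F Filter.atTop (Set.Icc 0 1) := by
  rw [Metric.tendstoUniformlyOn_iff]
  intro c hc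
  have hUC := (isCompact_Icc : IsCompact (Set.Icc (-1:ℝ) 2)).uniformContinuousOn_of_continuous
    hFcont.continuousOn
  rw [Metric.uniformContinuousOn_iff] at hUC
  obtain ⟨δ, hδ0, hδ⟩ := hUC (c/2) (by linarith)
  set ε := min (δ/3) 1 with hεdef
  have hε0 : 0 < ε := lt_min (by linarith) one_pos
  have hε1 : ε ≤ 1 := min_le_right _ _
  have hεδ : ε ≤ δ/3 := min_le_left _ _
  have hmod : ∀ t ∈ Set.Icc (0:ℝ) 1, F (t+ε) - F (t-ε) < c/2 := by
    intro t ht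
    have h1 : t + ε ∈ Set.Icc (-1:ℝ) 2 := ⟨by linarith [ht.1], by linarith [ht.2]⟩
    have h2 : t - ε ∈ Set.Icc (-1:ℝ) 2 := ⟨by linarith [ht.1], by linarith [ht.2]⟩
    have hdist : dist (t+ε) (t-ε) < δ := by
      rw [Real.dist_eq, show (t+ε) - (t-ε) = 2*ε by ring, abs_of_nonneg (by linarith)]
      linarith
    have := hδ _ h1 _ h2 hdist
    rw [Real.dist_eq] at this
    calc F (t+ε) - F (t-ε) ≤ |F (t+ε) - F (t-ε)| := le_abs_self _
      _ < c/2 := this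
  obtain ⟨N, hN⟩ : ∃ N : ℕ, ∀ n ≥ N, 0 < n ∧ 2/ε ≤ (n:ℝ) ∧ 1/((n:ℝ)*ε^2) < c/2 := by
    refine ⟨⌈max (2/ε) (2/(c*ε^2))⌉₊ + 1, fun n hn => ?_⟩
    have h1 : (⌈max (2/ε) (2/(c*ε^2))⌉₊ : ℝ) + 1 ≤ (n:ℝ) := by exact_mod_cast hn
    have h2 : max (2/ε) (2/(c*ε^2)) ≤ (⌈max (2/ε) (2/(c*ε^2))⌉₊ : ℝ) := Nat.le_ceil _
    have hn0 : 0 < n := by omega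
    have hna : 2/ε ≤ (n:ℝ) := le_trans (le_max_left _ _) (by linarith)
    have hnb : 2/(c*ε^2) < (n:ℝ) := lt_of_le_of_lt (le_max_right _ _) (by linarith)
    refine ⟨hn0, hna, ?_⟩
    rw [div_lt_iff₀ (by positivity)] at hnb
    rw [div_lt_div_iff₀ (by positivity : (0:ℝ) < (n:ℝ)*ε^2) (by norm_num : (0:ℝ) < 2)]
    nlinarith
  filter_upwards [Filter.eventually_ge_atTop N] with n hn
  obtain ⟨hn0, hn2, hnδ⟩ := hN n hn
  intro t ht
  show dist (F t) ((μ.bind (mcKer n) (Set.Iic t)).toReal) < c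
  have hub := mcReal_upper μ hsupp hn0 (t := t) hε0
  have hlb := mcReal_lower μ hsupp hn0 (t := t) hε0 hn2
  have hFmono : ∀ a b : ℝ, a ≤ b → F a ≤ F b := fun a b hab => by
    rw [hF a, hF b]
    exact ENNReal.toReal_mono (measure_ne_top μ _) (measure_mono (Set.Iic_subset_Iic.2 hab))
  rw [← hF (t+ε)] at hub
  rw [← hF (t-ε)] at hlb
  have hm := hmod t ht
  have hm1 := hFmono (t-ε) t (by linarith)
  have hm2 := hFmono t (t+ε) (by linarith)
  rw [Real.dist_eq, abs_sub_lt_iff]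
  constructor <;> linarith
end

section
/- Let f: [0,1] → ℝ≥0 be a continuous, monotonically decreasing probability density with f(τ) < 1/α at τ ∈ (0,1). Then ∫₀^{τ − 1/√n} f(p)/(p − τ)² dp + ∫_{τ − 1/√n}^{τ + 1/√n} n·f(p) dp + ∫_{τ + 1/√n}^1 f(p)/(p − τ)² dp = O(√n · log n) as n → ∞ (in fact O(√n) up to logarithmic factors in n). -/
open MeasureTheory

lemma aux_int15 (τ a b : ℝ) (h : (0:ℝ) ∉ Set.uIcc (a - τ) (b - τ)) :
    ∫ p in a..b, ((p - τ) ^ 2)⁻¹ = (a - τ)⁻¹ - (b - τ)⁻¹ := by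
  rw [intervalIntegral.integral_comp_sub_right (fun x => (x^2)⁻¹) τ]
  have h2 : ∀ x : ℝ, ((x:ℝ)^2)⁻¹ = x ^ (-2 : ℤ) := fun x => by
    rw [zpow_neg, zpow_two, sq]
  simp_rw [h2]
  rw [integral_zpow (Or.inr ⟨by norm_num, h⟩)]
  norm_num
  ring

lemma aux_integrable15 (f : ℝ → ℝ) (τ a b : ℝ)
    (hf : ContinuousOn f (Set.uIcc a b))
    (hne : ∀ p ∈ Set.uIcc a b, p - τ ≠ 0) :
    IntervalIntegrable (fun p => f p * ((p - τ) ^ 2)⁻¹) volume a b := by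
  apply ContinuousOn.intervalIntegrable
  exact hf.mul (ContinuousOn.inv₀ (by fun_prop)
    (fun p hp => pow_ne_zero 2 (hne p hp)))

set_option maxHeartbeats 1000000 in
/-- The per-hypothesis expected MC sample complexity integral
`E[min(n, 1/(P-τ)²)]` is `Õ(√n)`, i.e. `O(√n · log n)`. -/
theorem stmt_15 (f : ℝ → ℝ) (α τ : ℝ) (hα : 0 < α)
    (hf_cont : ContinuousOn f (Set.Icc 0 1))
    (hf_anti : AntitoneOn f (Set.Icc 0 1))
    (hf_nonneg : ∀ p ∈ Set.Icc (0 : ℝ) 1, 0 ≤ f p)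
    (hf_density : ∫ p in (0 : ℝ)..1, f p = 1)
    (hτ : τ ∈ Set.Ioo (0 : ℝ) 1) (hfτ : f τ < 1 / α) :
    ∃ C > (0 : ℝ), ∀ᶠ n : ℕ in Filter.atTop,
      (∫ p in (0 : ℝ)..(τ - 1 / Real.sqrt n), f p / (p - τ) ^ 2) +
        (∫ p in (τ - 1 / Real.sqrt n)..(τ + 1 / Real.sqrt n), (n : ℝ) * f p) +
        (∫ p in (τ + 1 / Real.sqrt n)..(1 : ℝ), f p / (p - τ) ^ 2)
      ≤ C * Real.sqrt n * Real.log n := by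
  obtain ⟨hτ0, hτ1⟩ := hτ
  set M := f 0 with hMdef
  have hM0 : 0 ≤ M := hf_nonneg 0 (by constructor <;> norm_num)
  have hfle : ∀ p ∈ Set.Icc (0:ℝ) 1, f p ≤ M := fun p hp =>
    hf_anti ⟨le_refl 0, zero_le_one⟩ hp hp.1
  set δ := min τ (1 - τ) with hδdef
  have hδ : 0 < δ := lt_min hτ0 (by linarith)
  refine ⟨4 * M + 1, by positivity, ?_⟩
  rw [Filter.eventually_atTop]
  refine ⟨max 3 (⌈δ⁻¹ ^ 2⌉₊ + 1), fun n hn => ?_⟩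
  have hn3 : (3:ℝ) ≤ (n:ℝ) := by exact_mod_cast le_trans (le_max_left _ _) hn
  have hn0 : (0:ℝ) < (n:ℝ) := by linarith
  have hnδ : δ⁻¹ ^ 2 < (n:ℝ) := by
    have h1 : ⌈δ⁻¹ ^ 2⌉₊ + 1 ≤ n := le_trans (le_max_right _ _) hn
    have h2 : ((⌈δ⁻¹ ^ 2⌉₊ : ℝ) + 1) ≤ (n:ℝ) := by exact_mod_cast h1
    linarith [Nat.le_ceil (δ⁻¹ ^ 2)]
  have hsn : δ⁻¹ < Real.sqrt n := by
    have h := Real.sqrt_lt_sqrt (by positivity) hnδ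
    rwa [Real.sqrt_sq (by positivity)] at h
  have hsn0 : (0:ℝ) < Real.sqrt n := lt_trans (by positivity) hsn
  set ε := 1 / Real.sqrt n with hεdef
  have hε0 : 0 < ε := by positivity
  have hεδ : ε < δ := by
    rw [hεdef, div_lt_iff₀ hsn0]
    calc (1:ℝ) = δ * δ⁻¹ := (mul_inv_cancel₀ (ne_of_gt hδ)).symm
    _ < δ * Real.sqrt n := by exact mul_lt_mul_of_pos_left hsn hδ
  have hετ : ε < τ := lt_of_lt_of_le hεδ (min_le_left _ _)
  have hε1τ : ε < 1 - τ := lt_of_lt_of_le hεδ (min_le_right _ _)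
  have hεinv : ε⁻¹ = Real.sqrt n := by rw [hεdef, one_div, inv_inv]
  -- log n ≥ 1
  have hlog : 1 ≤ Real.log n := by
    rw [Real.le_log_iff_exp_le hn0]
    calc Real.exp 1 ≤ 3 := by linarith [Real.exp_one_lt_d9]
    _ ≤ (n:ℝ) := hn3
  -- rewrite div as mul inv
  have hdiv : ∀ g : ℝ → ℝ, ∀ a b : ℝ,
      (∫ p in a..b, g p / (p - τ) ^ 2) = ∫ p in a..b, g p * ((p - τ) ^ 2)⁻¹ := by
    intro g a b; simp_rw [div_eq_mul_inv]
  -- Tail 1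
  have hsub1 : Set.uIcc (0:ℝ) (τ - ε) ⊆ Set.Icc 0 1 := by
    rw [Set.uIcc_of_le (by linarith)]
    exact Set.Icc_subset_Icc le_rfl (by linarith)
  have hne1 : ∀ p ∈ Set.uIcc (0:ℝ) (τ - ε), p - τ ≠ 0 := by
    intro p hp
    rw [Set.uIcc_of_le (by linarith)] at hp
    have := hp.2
    intro hc; nlinarith
  have hint1 : IntervalIntegrable (fun p => f p * ((p - τ) ^ 2)⁻¹) volume 0 (τ - ε) :=
    aux_integrable15 f τ 0 (τ - ε) (hf_cont.mono hsub1) hne1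
  have hint1' : IntervalIntegrable (fun p => M * ((p - τ) ^ 2)⁻¹) volume 0 (τ - ε) :=
    aux_integrable15 (fun _ => M) τ 0 (τ - ε) continuousOn_const hne1
  have hT1 : (∫ p in (0:ℝ)..(τ - ε), f p / (p - τ) ^ 2) ≤ M * Real.sqrt n := by
    rw [hdiv]
    have hmono : (∫ p in (0:ℝ)..(τ - ε), f p * ((p - τ) ^ 2)⁻¹)
        ≤ ∫ p in (0:ℝ)..(τ - ε), M * ((p - τ) ^ 2)⁻¹ := by
      apply intervalIntegral.integral_mono_on (by linarith) hint1 hint1'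
      intro p hp
      have hp1 : p ∈ Set.Icc (0:ℝ) 1 := hsub1 (by rwa [Set.uIcc_of_le (by linarith)])
      have : (0:ℝ) < ((p - τ) ^ 2)⁻¹ := by
        have := hne1 p (by rwa [Set.uIcc_of_le (by linarith)])
        positivity
      exact mul_le_mul_of_nonneg_right (hfle p hp1) (le_of_lt this)
    refine le_trans hmono ?_
    rw [intervalIntegral.integral_const_mul, aux_int15 τ 0 (τ - ε) ?_]
    · have h1 : (0:ℝ) - τ = -τ := by ring
      have h2 : τ - ε - τ = -ε := by ring
      rw [h1, h2]
      have : (-τ)⁻¹ - (-ε)⁻¹ = ε⁻¹ - τ⁻¹ := by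
        rw [inv_neg, inv_neg]; ring
      rw [this, hεinv]
      have hτinv : 0 ≤ τ⁻¹ := by positivity
      nlinarith
    · intro hc
      rw [Set.uIcc_of_le (by linarith : (0:ℝ) - τ ≤ τ - ε - τ)] at hc
      have := hc.2; simp at this; linarith
  -- Tail 3
  have hsub3 : Set.uIcc (τ + ε) (1:ℝ) ⊆ Set.Icc 0 1 := by
    rw [Set.uIcc_of_le (by linarith)]
    exact Set.Icc_subset_Icc (by linarith) le_rfl
  have hne3 : ∀ p ∈ Set.uIcc (τ + ε) (1:ℝ), p - τ ≠ 0 := by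
    intro p hp
    rw [Set.uIcc_of_le (by linarith)] at hp
    have := hp.1
    intro hc; nlinarith
  have hint3 : IntervalIntegrable (fun p => f p * ((p - τ) ^ 2)⁻¹) volume (τ + ε) 1 :=
    aux_integrable15 f τ (τ + ε) 1 (hf_cont.mono hsub3) hne3
  have hint3' : IntervalIntegrable (fun p => M * ((p - τ) ^ 2)⁻¹) volume (τ + ε) 1 :=
    aux_integrable15 (fun _ => M) τ (τ + ε) 1 continuousOn_const hne3
  have hT3 : (∫ p in (τ + ε)..(1:ℝ), f p / (p - τ) ^ 2) ≤ M * Real.sqrt n := by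
    rw [hdiv]
    have hmono : (∫ p in (τ + ε)..(1:ℝ), f p * ((p - τ) ^ 2)⁻¹)
        ≤ ∫ p in (τ + ε)..(1:ℝ), M * ((p - τ) ^ 2)⁻¹ := by
      apply intervalIntegral.integral_mono_on (by linarith) hint3 hint3'
      intro p hp
      have hp1 : p ∈ Set.Icc (0:ℝ) 1 := hsub3 (by rwa [Set.uIcc_of_le (by linarith)])
      have : (0:ℝ) < ((p - τ) ^ 2)⁻¹ := by
        have := hne3 p (by rwa [Set.uIcc_of_le (by linarith)])
        positivity
      exact mul_le_mul_of_nonneg_right (hfle p hp1) (le_of_lt this)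
    refine le_trans hmono ?_
    rw [intervalIntegral.integral_const_mul, aux_int15 τ (τ + ε) 1 ?_]
    · have h1 : τ + ε - τ = ε := by ring
      rw [h1, hεinv]
      have h1τ' : (0:ℝ) < 1 - τ := by linarith
      have : (0:ℝ) ≤ (1 - τ)⁻¹ := by positivity
      nlinarith
    · intro hc
      rw [Set.uIcc_of_le (by linarith : τ + ε - τ ≤ 1 - τ)] at hc
      have := hc.1; simp at this; linarith
  -- Middle
  have hsub2 : Set.uIcc (τ - ε) (τ + ε) ⊆ Set.Icc 0 1 := by
    rw [Set.uIcc_of_le (by linarith)]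
    exact Set.Icc_subset_Icc (by linarith) (by linarith)
  have hint2 : IntervalIntegrable (fun p => (n:ℝ) * f p) volume (τ - ε) (τ + ε) :=
    (continuousOn_const.mul (hf_cont.mono hsub2)).intervalIntegrable
  have hT2 : (∫ p in (τ - ε)..(τ + ε), (n:ℝ) * f p) ≤ 2 * M * Real.sqrt n := by
    have hmono : (∫ p in (τ - ε)..(τ + ε), (n:ℝ) * f p)
        ≤ ∫ _p in (τ - ε)..(τ + ε), (n:ℝ) * M := by
      apply intervalIntegral.integral_mono_on (by linarith) hint2
        intervalIntegrable_const
      intro p hp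
      have hp1 : p ∈ Set.Icc (0:ℝ) 1 := hsub2 (by rwa [Set.uIcc_of_le (by linarith)])
      exact mul_le_mul_of_nonneg_left (hfle p hp1) (le_of_lt hn0)
    have h2 : (n:ℝ) * ε = Real.sqrt n := by
      rw [hεdef, mul_one_div, Real.div_sqrt]
    have hval : (∫ _p in (τ - ε)..(τ + ε), (n:ℝ) * M) = 2 * M * Real.sqrt n := by
      rw [intervalIntegral.integral_const, smul_eq_mul]
      calc (τ + ε - (τ - ε)) * ((n:ℝ) * M) = 2 * ((n:ℝ) * ε) * M := by ring
      _ = 2 * M * Real.sqrt n := by rw [h2]; ring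
    exact le_trans hmono (le_of_eq hval)
  -- Combine
  have hsum : (∫ p in (0:ℝ)..(τ - ε), f p / (p - τ) ^ 2)
      + (∫ p in (τ - ε)..(τ + ε), (n:ℝ) * f p)
      + (∫ p in (τ + ε)..(1:ℝ), f p / (p - τ) ^ 2) ≤ 4 * M * Real.sqrt n := by
    linarith
  refine le_trans hsum ?_
  have h4 : (0:ℝ) ≤ (4 * M + 1) * Real.sqrt n := by positivity
  have h5 : (4 * M + 1) * Real.sqrt n * 1 ≤ (4 * M + 1) * Real.sqrt n * Real.log n :=
    mul_le_mul_of_nonneg_left hlog h4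
  nlinarith [Real.sqrt_nonneg (n:ℝ)]
end
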